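/- arXiv:1303.5496 — 2 statements merged into one kernel-verified Lean document; each statement's English description precedes it below -/
import Mathlib

section
/- Let n ≥ 2 and let D ⊊ ℝⁿ be an Apollonian domain satisfying α̃_D(x,y) ≤ c₂ j'_D(x,y) for all x, y ∈ D, for some constant c₂ > 1. Let γ ⊂ D be a path joining two points with α_D(γ) = α̃_D of its endpoints, and let u, v be points of γ (in this order along γ) such that d_D(u) ≤ d_D(v), d_D(v) = 2 d_D(u), and d_D(w) ≤ 2 d_D(u) for all w ∈ γ[u,v]. Then diam(γ[u,v]) ≤ 24([c₂]+1) ρ_D(u,v), where [·] denotes the greatest integer part. -/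
open Set Metric Real

noncomputable section

/-- Euclidean `n`-space. -/
abbrev Eucl (n : ℕ) : Type := EuclideanSpace ℝ (Fin n)

/-- A domain: a nonempty, open, connected, proper subset of `ℝⁿ`. -/
def IsDomainIn {n : ℕ} (D : Set (Eucl n)) : Prop :=
  IsOpen D ∧ IsConnected D ∧ D ≠ Set.univ

/-- `D` is Apollonian: its complement is not contained in any hyperplane. -/
def IsApollonian {n : ℕ} (D : Set (Eucl n)) : Prop :=
  ¬ ∃ (x₀ v : Eucl n), v ≠ 0 ∧ ∀ y ∈ Dᶜ, (inner ℝ v (y - x₀) : ℝ) = 0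

/-- Distance from `x` to the boundary `∂D`. -/
def bdist {n : ℕ} (D : Set (Eucl n)) (x : Eucl n) : ℝ :=
  Metric.infDist x (frontier D)

/-- The Apollonian metric `α_D(x,y) = sup_{a,b ∈ ∂D} log (|a-x||b-y| / (|a-y||b-x|))`,
with the convention about `∞` as a boundary point (which occurs exactly when both `D`
and its complement are unbounded): if `a = ∞` the term is `log(|b-y|/|b-x|)`, if `b = ∞`
the term is `log(|a-x|/|a-y|)`, and if both are `∞` the term is `0`. -/
def apol {n : ℕ} (D : Set (Eucl n)) (x y : Eucl n) : ℝ :=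
  sSup ({r | ∃ a ∈ frontier D, ∃ b ∈ frontier D,
          r = Real.log ((dist a x * dist b y) / (dist a y * dist b x))} ∪
        {r | (¬ Bornology.IsBounded D ∧ ¬ Bornology.IsBounded Dᶜ) ∧
          ((∃ b ∈ frontier D, r = Real.log (dist b y / dist b x)) ∨
           (∃ a ∈ frontier D, r = Real.log (dist a x / dist a y)) ∨ r = 0)})

/-- `γ`, restricted to `[0,1]`, is a path in `D` from `x` to `y`. -/
def IsPathIn {n : ℕ} (D : Set (Eucl n)) (x y : Eucl n) (γ : ℝ → Eucl n) : Prop :=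
  ContinuousOn γ (Set.Icc 0 1) ∧ Set.MapsTo γ (Set.Icc 0 1) D ∧ γ 0 = x ∧ γ 1 = y

/-- A path is rectifiable when it has finite Euclidean length. -/
def Rectifiable {n : ℕ} (γ : ℝ → Eucl n) : Prop :=
  eVariationOn γ (Set.Icc 0 1) ≠ ⊤

/-- Euclidean arc length of `γ` over `[a,b]`. -/
def elen {n : ℕ} (γ : ℝ → Eucl n) (a b : ℝ) : ℝ :=
  (eVariationOn γ (Set.Icc a b)).toReal

/-- The `d`-length of the path `γ` over `[a,b]`: the supremum of
`Σ d(γ(t_i), γ(t_{i+1}))` over all partitions `a = t₀ ≤ t₁ ≤ ⋯ ≤ t_k = b`. -/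
def dLength {n : ℕ} (d : Eucl n → Eucl n → ℝ) (γ : ℝ → Eucl n) (a b : ℝ) : ℝ :=
  sSup {s | ∃ (k : ℕ) (t : ℕ → ℝ), Monotone t ∧ t 0 = a ∧ t k = b ∧
        s = ∑ i ∈ Finset.range k, d (γ (t i)) (γ (t (i + 1)))}

/-- The inner metric of `d`: infimum of `d`-lengths of rectifiable paths in `D`
joining `x` and `y`. -/
def innerMetric {n : ℕ} (D : Set (Eucl n)) (d : Eucl n → Eucl n → ℝ) (x y : Eucl n) : ℝ :=
  sInf {L | ∃ γ : ℝ → Eucl n, IsPathIn D x y γ ∧ Rectifiable γ ∧ L = dLength d γ 0 1}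

/-- The Apollonian inner metric `α̃_D`. -/
def innerApol {n : ℕ} (D : Set (Eucl n)) (x y : Eucl n) : ℝ :=
  innerMetric D (apol D) x y

/-- The inner diameter metric `ρ_D(x,y) = inf_γ diam γ`. -/
def rhoD {n : ℕ} (D : Set (Eucl n)) (x y : Eucl n) : ℝ :=
  sInf {L | ∃ γ : ℝ → Eucl n, IsPathIn D x y γ ∧ L = Metric.diam (γ '' Set.Icc 0 1)}

/-- `j'_D(x,y) = log (1 + ρ_D(x,y) / min (d_D(x), d_D(y)))`. -/
def jP {n : ℕ} (D : Set (Eucl n)) (x y : Eucl n) : ℝ :=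
  Real.log (1 + rhoD D x y / min (bdist D x) (bdist D y))

/-- The quasihyperbolic metric `k_D(x,y) = inf_γ ∫_γ |dz|/d_D(z)`. -/
def quasiHyp {n : ℕ} (D : Set (Eucl n)) (x y : Eucl n) : ℝ :=
  sInf {L | ∃ γ : ℝ → Eucl n, IsPathIn D x y γ ∧ DifferentiableOn ℝ γ (Set.Icc 0 1) ∧
        L = ∫ t in (0:ℝ)..1, ‖derivWithin γ (Set.Icc 0 1) t‖ / bdist D (γ t)}

/-- `λ_D(x,y)`: infimum of Euclidean arc lengths of paths in `D` joining `x` and `y`. -/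
def lambdaD {n : ℕ} (D : Set (Eucl n)) (x y : Eucl n) : ℝ :=
  sInf {L | ∃ γ : ℝ → Eucl n, IsPathIn D x y γ ∧ Rectifiable γ ∧ L = elen γ 0 1}

/-- `D` is inner `c`-uniform. -/
def IsInnerUniform {n : ℕ} (D : Set (Eucl n)) (c : ℝ) : Prop :=
  ∀ x ∈ D, ∀ y ∈ D, ∃ γ : ℝ → Eucl n, IsPathIn D x y γ ∧ Rectifiable γ ∧
    (∀ t ∈ Set.Icc (0:ℝ) 1, min (elen γ 0 t) (elen γ t 1) ≤ c * bdist D (γ t)) ∧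
    elen γ 0 1 ≤ c * lambdaD D x y

/-- Condition (4): every pair of points of `D` can be joined by an arc `γ` with
`min(diam γ[x,w], diam γ[y,w]) ≤ c d_D(w)` for all `w ∈ γ` and `diam γ ≤ c ρ_D(x,y)`. -/
def DiamCond {n : ℕ} (D : Set (Eucl n)) (c : ℝ) : Prop :=
  ∀ x ∈ D, ∀ y ∈ D, ∃ γ : ℝ → Eucl n, IsPathIn D x y γ ∧
    (∀ t ∈ Set.Icc (0:ℝ) 1,
      min (Metric.diam (γ '' Set.Icc 0 t)) (Metric.diam (γ '' Set.Icc t 1))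
        ≤ c * bdist D (γ t)) ∧
    Metric.diam (γ '' Set.Icc 0 1) ≤ c * rhoD D x y

section Helpers

variable {n : ℕ} {D : Set (Eucl n)}

lemma frontier_nonempty' (hD : IsDomainIn D) : (frontier D).Nonempty := by
  rw [nonempty_frontier_iff]
  exact ⟨hD.2.1.nonempty, hD.2.2⟩

lemma not_mem_frontier_of_mem (hD : IsDomainIn D) {x : Eucl n} (hx : x ∈ D) :
    x ∉ frontier D := by
  intro hxf
  exact hxf.2 (by rwa [hD.1.interior_eq])

lemma bdist_pos (hD : IsDomainIn D) {x : Eucl n} (hx : x ∈ D) : 0 < bdist D x := by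
  rw [bdist, ← (isClosed_frontier.notMem_iff_infDist_pos (frontier_nonempty' hD))]
  exact not_mem_frontier_of_mem hD hx

lemma bdist_le_dist (hD : IsDomainIn D) {a x : Eucl n} (ha : a ∈ frontier D) :
    bdist D x ≤ dist a x := by
  rw [dist_comm]; exact Metric.infDist_le_dist_of_mem ha

lemma dist_frontier_pos (hD : IsDomainIn D) {a x : Eucl n} (ha : a ∈ frontier D)
    (hx : x ∈ D) : 0 < dist a x :=
  lt_of_lt_of_le (bdist_pos hD hx) (bdist_le_dist hD ha)

lemma log_ratio_le (hD : IsDomainIn D) {a z : Eucl n} (ha : a ∈ frontier D)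
    (hz : z ∈ D) (w : Eucl n) (hw : w ∈ D) :
    Real.log (dist a w / dist a z) ≤ dist w z / bdist D z := by
  have hzpos : 0 < dist a z := dist_frontier_pos hD ha hz
  have hwpos : 0 < dist a w := dist_frontier_pos hD ha hw
  have hb : 0 < bdist D z := bdist_pos hD hz
  have hbz : bdist D z ≤ dist a z := bdist_le_dist hD ha
  have h1 : Real.log (dist a w / dist a z) ≤ dist a w / dist a z - 1 :=
    Real.log_le_sub_one_of_pos (by positivity)
  have h2 : dist a w - dist a z ≤ dist w z := by
    have := abs_dist_sub_le w z a
    rw [abs_le] at this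
    linarith [this.2, dist_comm w a, dist_comm z a]
  have h3 : dist a w / dist a z - 1 = (dist a w - dist a z) / dist a z := by
    field_simp
  have h4 : (dist a w - dist a z) / dist a z ≤ dist w z / dist a z := by
    gcongr
  have h5 : dist w z / dist a z ≤ dist w z / bdist D z := by
    gcongr
  linarith

/-- The defining set of the Apollonian metric. -/
def apolSet (D : Set (Eucl n)) (x y : Eucl n) : Set ℝ :=
  {r | ∃ a ∈ frontier D, ∃ b ∈ frontier D,
          r = Real.log ((dist a x * dist b y) / (dist a y * dist b x))} ∪
  {r | (¬ Bornology.IsBounded D ∧ ¬ Bornology.IsBounded Dᶜ) ∧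
          ((∃ b ∈ frontier D, r = Real.log (dist b y / dist b x)) ∨
           (∃ a ∈ frontier D, r = Real.log (dist a x / dist a y)) ∨ r = 0)}

lemma apol_eq_sSup (D : Set (Eucl n)) (x y : Eucl n) :
    apol D x y = sSup (apolSet D x y) := rfl

lemma zero_mem_apolSet (hD : IsDomainIn D) {x y : Eucl n} (hx : x ∈ D) (hy : y ∈ D) :
    (0 : ℝ) ∈ apolSet D x y := by
  obtain ⟨a, ha⟩ := frontier_nonempty' hD
  refine Or.inl ⟨a, ha, a, ha, ?_⟩
  have h1 := (dist_frontier_pos hD ha hx).ne'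
  have h2 := (dist_frontier_pos hD ha hy).ne'
  rw [mul_comm (dist a y) (dist a x), div_self (mul_ne_zero h1 h2), Real.log_one]

lemma apolSet_nonempty (hD : IsDomainIn D) {x y : Eucl n} (hx : x ∈ D) (hy : y ∈ D) :
    (apolSet D x y).Nonempty := ⟨0, zero_mem_apolSet hD hx hy⟩

lemma apolSet_le_bound (hD : IsDomainIn D) {x y : Eucl n} (hx : x ∈ D) (hy : y ∈ D) :
    ∀ r ∈ apolSet D x y, r ≤ dist x y / bdist D x + dist x y / bdist D y := by
  have hbx : 0 < bdist D x := bdist_pos hD hx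
  have hby : 0 < bdist D y := bdist_pos hD hy
  have hnn1 : 0 ≤ dist x y / bdist D x := by positivity
  have hnn2 : 0 ≤ dist x y / bdist D y := by positivity
  rintro r (⟨a, ha, b, hb, rfl⟩ | ⟨-, (⟨b, hb, rfl⟩ | ⟨a, ha, rfl⟩ | rfl)⟩)
  · have h1 : Real.log (dist a x / dist a y) ≤ dist x y / bdist D y :=
      log_ratio_le hD ha hy x hx
    have h2 : Real.log (dist b y / dist b x) ≤ dist x y / bdist D x := by
      rw [dist_comm x y]; exact log_ratio_le hD hb hx y hy
    have hax : 0 < dist a x := dist_frontier_pos hD ha hx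
    have hay : 0 < dist a y := dist_frontier_pos hD ha hy
    have hbx' : 0 < dist b x := dist_frontier_pos hD hb hx
    have hby' : 0 < dist b y := dist_frontier_pos hD hb hy
    have : (dist a x * dist b y) / (dist a y * dist b x)
        = (dist a x / dist a y) * (dist b y / dist b x) := by ring
    rw [this, Real.log_mul (by positivity) (by positivity)]
    linarith
  · have : Real.log (dist b y / dist b x) ≤ dist x y / bdist D x := by
      rw [dist_comm x y]; exact log_ratio_le hD hb hx y hy
    linarith
  · have : Real.log (dist a x / dist a y) ≤ dist x y / bdist D y :=
      log_ratio_le hD ha hy x hx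
    linarith
  · linarith

lemma apolSet_bddAbove (hD : IsDomainIn D) {x y : Eucl n} (hx : x ∈ D) (hy : y ∈ D) :
    BddAbove (apolSet D x y) :=
  ⟨_, apolSet_le_bound hD hx hy⟩

lemma apol_nonneg (hD : IsDomainIn D) {x y : Eucl n} (hx : x ∈ D) (hy : y ∈ D) :
    0 ≤ apol D x y :=
  le_csSup (apolSet_bddAbove hD hx hy) (zero_mem_apolSet hD hx hy)

lemma apol_le_bound (hD : IsDomainIn D) {x y : Eucl n} (hx : x ∈ D) (hy : y ∈ D) :
    apol D x y ≤ dist x y / bdist D x + dist x y / bdist D y :=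
  csSup_le (apolSet_nonempty hD hx hy) (apolSet_le_bound hD hx hy)

lemma apol_self (hD : IsDomainIn D) {x : Eucl n} (hx : x ∈ D) : apol D x x = 0 := by
  refine le_antisymm (csSup_le (apolSet_nonempty hD hx hx) ?_) (apol_nonneg hD hx hx)
  rintro r (⟨a, ha, b, hb, rfl⟩ | ⟨-, (⟨b, hb, rfl⟩ | ⟨a, ha, rfl⟩ | rfl)⟩)
  · have h1 := (dist_frontier_pos hD ha hx).ne'
    have h2 := (dist_frontier_pos hD hb hx).ne'
    rw [div_self (mul_ne_zero h1 h2), Real.log_one]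
  · rw [div_self (dist_frontier_pos hD hb hx).ne', Real.log_one]
  · rw [div_self (dist_frontier_pos hD ha hx).ne', Real.log_one]
  · exact le_rfl

lemma apol_triangle (hD : IsDomainIn D) {x y z : Eucl n} (hx : x ∈ D) (hy : y ∈ D)
    (hz : z ∈ D) : apol D x z ≤ apol D x y + apol D y z := by
  refine csSup_le (apolSet_nonempty hD hx hz) ?_
  have bd1 := apolSet_bddAbove hD hx hy
  have bd2 := apolSet_bddAbove hD hy hz
  rintro r (⟨a, ha, b, hb, rfl⟩ | ⟨hP, (⟨b, hb, rfl⟩ | ⟨a, ha, rfl⟩ | rfl)⟩)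
  · have hax : 0 < dist a x := dist_frontier_pos hD ha hx
    have hay : 0 < dist a y := dist_frontier_pos hD ha hy
    have haz : 0 < dist a z := dist_frontier_pos hD ha hz
    have hbx : 0 < dist b x := dist_frontier_pos hD hb hx
    have hby : 0 < dist b y := dist_frontier_pos hD hb hy
    have hbz : 0 < dist b z := dist_frontier_pos hD hb hz
    have key : Real.log ((dist a x * dist b z) / (dist a z * dist b x))
        = Real.log ((dist a x * dist b y) / (dist a y * dist b x))
          + Real.log ((dist a y * dist b z) / (dist a z * dist b y)) := by
      rw [Real.log_div (by positivity) (by positivity),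
          Real.log_div (by positivity) (by positivity),
          Real.log_div (by positivity) (by positivity),
          Real.log_mul hax.ne' hbz.ne', Real.log_mul haz.ne' hbx.ne',
          Real.log_mul hax.ne' hby.ne', Real.log_mul hay.ne' hbx.ne',
          Real.log_mul hay.ne' hbz.ne', Real.log_mul haz.ne' hby.ne']
      ring
    rw [key]
    exact add_le_add (le_csSup bd1 (Or.inl ⟨a, ha, b, hb, rfl⟩))
      (le_csSup bd2 (Or.inl ⟨a, ha, b, hb, rfl⟩))
  · have hbx : 0 < dist b x := dist_frontier_pos hD hb hx
    have hby : 0 < dist b y := dist_frontier_pos hD hb hy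
    have hbz : 0 < dist b z := dist_frontier_pos hD hb hz
    have key : Real.log (dist b z / dist b x)
        = Real.log (dist b y / dist b x) + Real.log (dist b z / dist b y) := by
      rw [Real.log_div hbz.ne' hbx.ne', Real.log_div hby.ne' hbx.ne',
          Real.log_div hbz.ne' hby.ne']
      ring
    rw [key]
    exact add_le_add (le_csSup bd1 (Or.inr ⟨hP, Or.inl ⟨b, hb, rfl⟩⟩))
      (le_csSup bd2 (Or.inr ⟨hP, Or.inl ⟨b, hb, rfl⟩⟩))
  · have hax : 0 < dist a x := dist_frontier_pos hD ha hx
    have hay : 0 < dist a y := dist_frontier_pos hD ha hy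
    have haz : 0 < dist a z := dist_frontier_pos hD ha hz
    have key : Real.log (dist a x / dist a z)
        = Real.log (dist a x / dist a y) + Real.log (dist a y / dist a z) := by
      rw [Real.log_div hax.ne' haz.ne', Real.log_div hax.ne' hay.ne',
          Real.log_div hay.ne' haz.ne']
      ring
    rw [key]
    exact add_le_add (le_csSup bd1 (Or.inr ⟨hP, Or.inr (Or.inl ⟨a, ha, rfl⟩)⟩))
      (le_csSup bd2 (Or.inr ⟨hP, Or.inr (Or.inl ⟨a, ha, rfl⟩)⟩))
  · have := apol_nonneg hD hx hy
    have := apol_nonneg hD hy hz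
    linarith

lemma apol_ge_log (hD : IsDomainIn D) {x y a b : Eucl n} (hx : x ∈ D) (hy : y ∈ D)
    (ha : a ∈ frontier D) (hb : b ∈ frontier D) :
    Real.log ((dist a x * dist b y) / (dist a y * dist b x)) ≤ apol D x y :=
  le_csSup (apolSet_bddAbove hD hx hy) (Or.inl ⟨a, ha, b, hb, rfl⟩)

end Helpers
section Helpers2

variable {n : ℕ} {D : Set (Eucl n)}

/-- The defining set of `dLength`. -/
def pSet (d : Eucl n → Eucl n → ℝ) (γ : ℝ → Eucl n) (a b : ℝ) : Set ℝ :=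
  {s | ∃ (k : ℕ) (t : ℕ → ℝ), Monotone t ∧ t 0 = a ∧ t k = b ∧
        s = ∑ i ∈ Finset.range k, d (γ (t i)) (γ (t (i + 1)))}

lemma dLength_eq_sSup (d : Eucl n → Eucl n → ℝ) (γ : ℝ → Eucl n) (a b : ℝ) :
    dLength d γ a b = sSup (pSet d γ a b) := rfl

lemma trivial_mem_pSet {d : Eucl n → Eucl n → ℝ} {γ : ℝ → Eucl n} {a b : ℝ}
    (hab : a ≤ b) : d (γ a) (γ b) ∈ pSet d γ a b := by
  refine ⟨1, fun i => if i = 0 then a else b, ?_, by simp, by simp, by simp⟩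
  intro i j hij
  by_cases hi : i = 0
  · by_cases hj : j = 0 <;> simp [hi, hj, hab]
  · have hj : j ≠ 0 := by omega
    simp [hi, hj]

lemma pSet_nonempty {d : Eucl n → Eucl n → ℝ} {γ : ℝ → Eucl n} {a b : ℝ}
    (hab : a ≤ b) : (pSet d γ a b).Nonempty := ⟨_, trivial_mem_pSet hab⟩

lemma partition_mem_Icc {t : ℕ → ℝ} {a b : ℝ} {k : ℕ} (hmono : Monotone t)
    (h0 : t 0 = a) (hk : t k = b) {i : ℕ} (hi : i ≤ k) : t i ∈ Set.Icc a b :=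
  ⟨h0 ▸ hmono (Nat.zero_le i), hk ▸ hmono hi⟩

/-- Sum of distances along a partition is at most the (real) variation. -/
lemma sum_dist_le_evar {γ : ℝ → Eucl n} {a b : ℝ} {k : ℕ} {t : ℕ → ℝ}
    (hmono : Monotone t) (h0 : t 0 = a) (hk : t k = b)
    (hfin : eVariationOn γ (Set.Icc a b) ≠ ⊤) :
    ∑ i ∈ Finset.range k, dist (γ (t i)) (γ (t (i + 1)))
      ≤ (eVariationOn γ (Set.Icc a b)).toReal := by
  set u : ℕ → ℝ := fun i => t (min i k) with hu
  have humono : Monotone u := hmono.comp (fun i j hij => min_le_min hij le_rfl)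
  have humem : ∀ i, u i ∈ Set.Icc a b := fun i =>
    partition_mem_Icc hmono h0 hk (min_le_right i k)
  have key := eVariationOn.sum_le (f := γ) (n := k) humono humem
  have heq : ∀ i ∈ Finset.range k,
      dist (γ (t i)) (γ (t (i + 1))) = (edist (γ (u (i+1))) (γ (u i))).toReal := by
    intro i hi
    rw [Finset.mem_range] at hi
    have h1 : u i = t i := by rw [hu]; simp [min_eq_left hi.le]
    have h2 : u (i+1) = t (i+1) := by rw [hu]; simp [min_eq_left (by omega : i+1 ≤ k)]
    rw [h1, h2, dist_edist, edist_comm]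
  rw [Finset.sum_congr rfl heq, ← ENNReal.toReal_sum (fun i _ => edist_ne_top _ _)]
  exact ENNReal.toReal_mono hfin key

lemma evar_sub_finite {γ : ℝ → Eucl n} (hrec : Rectifiable γ) {a b : ℝ}
    (ha : 0 ≤ a) (hb : b ≤ 1) : eVariationOn γ (Set.Icc a b) ≠ ⊤ := by
  intro h
  apply hrec
  have hle := eVariationOn.mono γ (Set.Icc_subset_Icc ha hb)
  rw [h] at hle
  exact top_le_iff.mp hle

lemma pSet_bddAbove (hD : IsDomainIn D) {γ : ℝ → Eucl n}
    (hγc : ContinuousOn γ (Set.Icc 0 1)) (hγm : Set.MapsTo γ (Set.Icc 0 1) D)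
    (hrec : Rectifiable γ) {a b : ℝ} (ha : 0 ≤ a) (hab : a ≤ b) (hb : b ≤ 1) :
    BddAbove (pSet (apol D) γ a b) := by
  have hK : IsCompact (γ '' Set.Icc 0 1) := (isCompact_Icc).image_of_continuousOn hγc
  have hKne : (γ '' Set.Icc 0 1).Nonempty :=
    ⟨γ 0, Set.mem_image_of_mem γ (by norm_num)⟩
  obtain ⟨z₀, hz₀K, hz₀min⟩ := hK.exists_isMinOn hKne
    ((continuous_infDist_pt (frontier D)).continuousOn)
  obtain ⟨r₀, hr₀, hz₀⟩ := hz₀K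
  have hz₀D : z₀ ∈ D := hz₀ ▸ hγm hr₀
  set δ := bdist D z₀ with hδ
  have hδpos : 0 < δ := bdist_pos hD hz₀D
  have hδle : ∀ r ∈ Set.Icc (0:ℝ) 1, δ ≤ bdist D (γ r) := fun r hr =>
    isMinOn_iff.mp hz₀min (γ r) (Set.mem_image_of_mem γ hr)
  have hfin : eVariationOn γ (Set.Icc a b) ≠ ⊤ := evar_sub_finite hrec ha hb
  refine ⟨2/δ * (eVariationOn γ (Set.Icc a b)).toReal, ?_⟩
  rintro s ⟨k, t, hmono, h0, hk, rfl⟩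
  have hterm : ∀ i ∈ Finset.range k,
      apol D (γ (t i)) (γ (t (i+1))) ≤ 2/δ * dist (γ (t i)) (γ (t (i+1))) := by
    intro i hi
    rw [Finset.mem_range] at hi
    have hti : t i ∈ Set.Icc (0:ℝ) 1 :=
      (Set.Icc_subset_Icc ha hb) (partition_mem_Icc hmono h0 hk hi.le)
    have hti1 : t (i+1) ∈ Set.Icc (0:ℝ) 1 :=
      (Set.Icc_subset_Icc ha hb) (partition_mem_Icc hmono h0 hk (by omega))
    have h1 : γ (t i) ∈ D := hγm hti
    have h2 : γ (t (i+1)) ∈ D := hγm hti1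
    have hb1 : δ ≤ bdist D (γ (t i)) := hδle _ hti
    have hb2 : δ ≤ bdist D (γ (t (i+1))) := hδle _ hti1
    have hd : (0:ℝ) ≤ dist (γ (t i)) (γ (t (i+1))) := dist_nonneg
    have e1 : dist (γ (t i)) (γ (t (i+1))) / bdist D (γ (t i))
        ≤ dist (γ (t i)) (γ (t (i+1))) / δ := by gcongr
    have e2 : dist (γ (t i)) (γ (t (i+1))) / bdist D (γ (t (i+1)))
        ≤ dist (γ (t i)) (γ (t (i+1))) / δ := by gcongr
    have := apol_le_bound hD h1 h2
    have h5 : apol D (γ (t i)) (γ (t (i+1))) ≤ 2 * (dist (γ (t i)) (γ (t (i+1))) / δ) := by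
      linarith
    have h6 : 2 * (dist (γ (t i)) (γ (t (i+1))) / δ)
        = 2/δ * dist (γ (t i)) (γ (t (i+1))) := by ring
    linarith
  calc ∑ i ∈ Finset.range k, apol D (γ (t i)) (γ (t (i+1)))
      ≤ ∑ i ∈ Finset.range k, 2/δ * dist (γ (t i)) (γ (t (i+1))) :=
        Finset.sum_le_sum hterm
    _ = 2/δ * ∑ i ∈ Finset.range k, dist (γ (t i)) (γ (t (i+1))) := by
        rw [Finset.mul_sum]
    _ ≤ 2/δ * (eVariationOn γ (Set.Icc a b)).toReal := by
        have := sum_dist_le_evar hmono h0 hk hfin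
        have h2δ : (0:ℝ) ≤ 2/δ := by positivity
        nlinarith
end Helpers2
section Helpers3

variable {n : ℕ} {D : Set (Eucl n)}

lemma concat_mem_pSet {d : Eucl n → Eucl n → ℝ} {γ : ℝ → Eucl n} {a b c : ℝ}
    {s1 s2 : ℝ} (h1 : s1 ∈ pSet d γ a b) (h2 : s2 ∈ pSet d γ b c) :
    s1 + s2 ∈ pSet d γ a c := by
  obtain ⟨k1, t1, hm1, h01, hk1, rfl⟩ := h1
  obtain ⟨k2, t2, hm2, h02, hk2, rfl⟩ := h2
  refine ⟨k1 + k2, fun i => if i ≤ k1 then t1 i else t2 (i - k1), ?_, ?_, ?_, ?_⟩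
  · intro i j hij
    by_cases hi : i ≤ k1 <;> by_cases hj : j ≤ k1 <;> simp only [hi, hj, if_pos, if_neg,
      if_true, if_false]
    · exact hm1 hij
    · calc t1 i ≤ t1 k1 := hm1 hi
        _ = t2 0 := by rw [hk1, h02]
        _ ≤ t2 (j - k1) := hm2 (Nat.zero_le _)
    · omega
    · exact hm2 (by omega)
  · simp [Nat.zero_le, h01]
  · by_cases hk : k2 = 0
    · subst hk
      simp only [Nat.add_zero, le_refl, if_pos, hk1]
      rw [← hk2, h02, ← hk1]
    · have : ¬ (k1 + k2 ≤ k1) := by omega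
      simp only [this, if_false, Nat.add_sub_cancel_left, hk2]
  · symm
    rw [Finset.range_eq_Ico, ← Finset.sum_Ico_consecutive _ (Nat.zero_le k1)
      (Nat.le_add_right k1 k2)]
    congr 1
    · rw [← Finset.range_eq_Ico]
      refine Finset.sum_congr rfl fun i hi => ?_
      rw [Finset.mem_range] at hi
      have e1 : i ≤ k1 := hi.le
      have e2 : i + 1 ≤ k1 := hi
      simp only [e1, e2, if_pos]
    · rw [Finset.sum_Ico_eq_sum_range]
      simp only [Nat.add_sub_cancel_left]
      refine Finset.sum_congr rfl fun i hi => ?_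
      rw [Finset.mem_range] at hi
      have e2 : ¬ (k1 + i + 1 ≤ k1) := by omega
      have e3 : k1 + i + 1 - k1 = i + 1 := by omega
      by_cases hi0 : i = 0
      · subst hi0
        simp only [Nat.add_zero, le_refl, if_pos, e2, if_false, e3, hk1, h02]
      · have e1 : ¬ (k1 + i ≤ k1) := by omega
        have e4 : k1 + i - k1 = i := by omega
        simp only [e1, e2, if_false, e3, e4]

lemma dLength_superadd {d : Eucl n → Eucl n → ℝ} {γ : ℝ → Eucl n} {a b c : ℝ}
    (hab : a ≤ b) (hbc : b ≤ c) (hbdd : BddAbove (pSet d γ a c)) :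
    dLength d γ a b + dLength d γ b c ≤ dLength d γ a c := by
  rw [dLength_eq_sSup, dLength_eq_sSup, dLength_eq_sSup]
  have h1 : sSup (pSet d γ a b) ≤ sSup (pSet d γ a c) - sSup (pSet d γ b c) := by
    refine csSup_le (pSet_nonempty hab) fun s1 hs1 => ?_
    have h2 : sSup (pSet d γ b c) ≤ sSup (pSet d γ a c) - s1 := by
      refine csSup_le (pSet_nonempty hbc) fun s2 hs2 => ?_
      have := le_csSup hbdd (concat_mem_pSet hs1 hs2)
      linarith
    linarith
  linarith

lemma dLength_subadd {d : Eucl n → Eucl n → ℝ} {γ : ℝ → Eucl n} {a b c : ℝ}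
    (hab : a ≤ b) (hbc : b ≤ c)
    (htri : ∀ p q : ℝ, p ∈ Set.Icc a b → q ∈ Set.Icc b c →
      d (γ p) (γ q) ≤ d (γ p) (γ b) + d (γ b) (γ q))
    (hself : d (γ b) (γ b) = 0)
    (hbdd1 : BddAbove (pSet d γ a b)) (hbdd2 : BddAbove (pSet d γ b c)) :
    dLength d γ a c ≤ dLength d γ a b + dLength d γ b c := by
  rw [dLength_eq_sSup, dLength_eq_sSup, dLength_eq_sSup]
  refine csSup_le (pSet_nonempty (hab.trans hbc)) ?_
  rintro s ⟨k, t, hmono, h0, hk, rfl⟩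
  have hmin : Monotone fun i => min (t i) b := fun i j hij => min_le_min (hmono hij) le_rfl
  have hmax : Monotone fun i => max (t i) b := fun i j hij => max_le_max (hmono hij) le_rfl
  have hmem1 : (∑ i ∈ Finset.range k, d (γ (min (t i) b)) (γ (min (t (i+1)) b)))
      ∈ pSet d γ a b :=
    ⟨k, fun i => min (t i) b, hmin, by simp only; rw [h0]; exact min_eq_left hab,
      by simp only; rw [hk]; exact min_eq_right hbc, rfl⟩
  have hmem2 : (∑ i ∈ Finset.range k, d (γ (max (t i) b)) (γ (max (t (i+1)) b)))
      ∈ pSet d γ b c :=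
    ⟨k, fun i => max (t i) b, hmax, by simp only; rw [h0]; exact max_eq_right hab,
      by simp only; rw [hk]; exact max_eq_left hbc, rfl⟩
  have hphase : ∀ i ∈ Finset.range k,
      d (γ (t i)) (γ (t (i+1)))
        ≤ d (γ (min (t i) b)) (γ (min (t (i+1)) b))
          + d (γ (max (t i) b)) (γ (max (t (i+1)) b)) := by
    intro i hi
    rw [Finset.mem_range] at hi
    have hti := partition_mem_Icc hmono h0 hk hi.le
    have hti1 := partition_mem_Icc hmono h0 hk (show i + 1 ≤ k by omega)
    by_cases h1 : t (i+1) ≤ b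
    · have h2 : t i ≤ b := (hmono (Nat.le_succ i)).trans h1
      rw [min_eq_left h1, min_eq_left h2, max_eq_right h1, max_eq_right h2, hself]
      simp
    · by_cases h2 : b ≤ t i
      · have h3 : b ≤ t (i+1) := h2.trans (hmono (Nat.le_succ i))
        rw [min_eq_right h2, min_eq_right h3, max_eq_left h2, max_eq_left h3, hself]
        simp
      · push_neg at h1 h2
        rw [min_eq_left h2.le, min_eq_right h1.le, max_eq_right h2.le, max_eq_left h1.le]
        exact htri _ _ ⟨hti.1, h2.le⟩ ⟨h1.le, hti1.2⟩
  calc ∑ i ∈ Finset.range k, d (γ (t i)) (γ (t (i+1)))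
      ≤ ∑ i ∈ Finset.range k, (d (γ (min (t i) b)) (γ (min (t (i+1)) b))
          + d (γ (max (t i) b)) (γ (max (t (i+1)) b))) := Finset.sum_le_sum hphase
    _ = (∑ i ∈ Finset.range k, d (γ (min (t i) b)) (γ (min (t (i+1)) b)))
          + ∑ i ∈ Finset.range k, d (γ (max (t i) b)) (γ (max (t (i+1)) b)) :=
        Finset.sum_add_distrib
    _ ≤ sSup (pSet d γ a b) + sSup (pSet d γ b c) :=
        add_le_add (le_csSup hbdd1 hmem1) (le_csSup hbdd2 hmem2)

lemma dLength_reparam {d : Eucl n → Eucl n → ℝ} {τ g : ℝ → Eucl n} {φ : ℝ → ℝ}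
    {a b a' b' : ℝ} (hab : a ≤ b) (hφ : Monotone φ) (ha : φ a = a') (hb : φ b = b')
    (heq : ∀ r ∈ Set.Icc a b, τ r = g (φ r))
    (hbdd : BddAbove (pSet d g a' b')) :
    dLength d τ a b ≤ dLength d g a' b' := by
  rw [dLength_eq_sSup, dLength_eq_sSup]
  refine csSup_le (pSet_nonempty hab) ?_
  rintro s ⟨k, t, hmono, h0, hk, rfl⟩
  refine le_csSup hbdd ⟨k, φ ∘ t, hφ.comp hmono, by simp [h0, ha], by simp [hk, hb], ?_⟩
  refine Finset.sum_congr rfl fun i hi => ?_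
  rw [Finset.mem_range] at hi
  rw [heq _ (partition_mem_Icc hmono h0 hk hi.le),
      heq _ (partition_mem_Icc hmono h0 hk (show i + 1 ≤ k by omega))]
  rfl

lemma evar_le_of_reparam {F G : ℝ → Eucl n} {φ : ℝ → ℝ} {a b : ℝ} {s : Set ℝ}
    (hφ : Monotone φ) (hmaps : Set.MapsTo φ (Set.Icc a b) s)
    (heq : ∀ r ∈ Set.Icc a b, F r = G (φ r)) :
    eVariationOn F (Set.Icc a b) ≤ eVariationOn G s := by
  rw [eVariationOn.eq_of_eqOn (fun r hr => (heq r hr : F r = (G ∘ φ) r))]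
  exact eVariationOn.comp_le_of_monotoneOn G φ (hφ.monotoneOn _) hmaps

end Helpers3
section Helpers4

variable {n : ℕ} {D : Set (Eucl n)}

/-- The defining set of `innerApol`. -/
def iSet (D : Set (Eucl n)) (x y : Eucl n) : Set ℝ :=
  {L | ∃ γ : ℝ → Eucl n, IsPathIn D x y γ ∧ Rectifiable γ ∧ L = dLength (apol D) γ 0 1}

lemma innerApol_eq_sInf (D : Set (Eucl n)) (x y : Eucl n) :
    innerApol D x y = sInf (iSet D x y) := rfl

/-- The defining set of `rhoD`. -/
def rSet (D : Set (Eucl n)) (x y : Eucl n) : Set ℝ :=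
  {L | ∃ γ : ℝ → Eucl n, IsPathIn D x y γ ∧ L = Metric.diam (γ '' Set.Icc 0 1)}

lemma rhoD_eq_sInf (D : Set (Eucl n)) (x y : Eucl n) :
    rhoD D x y = sInf (rSet D x y) := rfl

lemma dLength_nonneg' (hD : IsDomainIn D) {x y : Eucl n} {σ : ℝ → Eucl n}
    (hp : IsPathIn D x y σ) (hr : Rectifiable σ) : 0 ≤ dLength (apol D) σ 0 1 := by
  obtain ⟨hc, hm, h0, h1⟩ := hp
  have hb := pSet_bddAbove hD hc hm hr le_rfl zero_le_one le_rfl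
  have h2 := le_csSup hb (trivial_mem_pSet (d := apol D) (γ := σ) zero_le_one)
  have h3 := apol_nonneg hD (hm ⟨le_rfl, zero_le_one⟩) (hm ⟨zero_le_one, le_rfl⟩)
  rw [dLength_eq_sSup]
  linarith

lemma iSet_bddBelow (hD : IsDomainIn D) (x y : Eucl n) : BddBelow (iSet D x y) := by
  refine ⟨0, ?_⟩
  rintro L ⟨σ, hp, hr, rfl⟩
  exact dLength_nonneg' hD hp hr

end Helpers4

set_option maxHeartbeats 1000000 in
/-- Lemma 2.1(1): Suppose `α̃_D ≤ c₂ j'_D` on the Apollonian domain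
`D ⊊ ℝⁿ` (`n ≥ 2`), `c₂ > 1`. Let `γ` be a path in `D` whose `α_D`-length equals the
Apollonian inner distance of its endpoints, and let `u = γ s`, `v = γ t` (`s ≤ t`) with
`d_D(u) ≤ d_D(v)`, `d_D(v) = 2 d_D(u)` and `d_D(w) ≤ 2 d_D(u)` for all `w ∈ γ[u,v]`.
Then `diam γ[u,v] ≤ 24([c₂]+1) ρ_D(u,v)`. -/
theorem diam_subarc_le {n : ℕ} (hn : 2 ≤ n) (D : Set (Eucl n)) (hD : IsDomainIn D)
    (hA : IsApollonian D) (c₂ : ℝ) (hc₂ : 1 < c₂)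
    (h : ∀ x ∈ D, ∀ y ∈ D, innerApol D x y ≤ c₂ * jP D x y)
    (x y : Eucl n) (hx : x ∈ D) (hy : y ∈ D) (γ : ℝ → Eucl n)
    (hγ : IsPathIn D x y γ) (hrec : Rectifiable γ)
    (hopt : dLength (apol D) γ 0 1 = innerApol D x y)
    (s t : ℝ) (hs : s ∈ Set.Icc (0:ℝ) 1) (ht : t ∈ Set.Icc (0:ℝ) 1) (hst : s ≤ t)
    (huv : bdist D (γ s) ≤ bdist D (γ t))
    (hdv : bdist D (γ t) = 2 * bdist D (γ s))
    (hw : ∀ r ∈ Set.Icc s t, bdist D (γ r) ≤ 2 * bdist D (γ s)) :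
    Metric.diam (γ '' Set.Icc s t) ≤ 24 * ((⌊c₂⌋ : ℝ) + 1) * rhoD D (γ s) (γ t) := by
  obtain ⟨hγc, hγm, hγ0, hγ1⟩ := hγ
  have hs0 : (0:ℝ) ≤ s := hs.1
  have hs1 : s ≤ 1 := hs.2
  have ht0 : (0:ℝ) ≤ t := ht.1
  have ht1 : t ≤ 1 := ht.2
  have hst01 : Set.Icc s t ⊆ Set.Icc (0:ℝ) 1 := Set.Icc_subset_Icc hs0 ht1
  have hu : γ s ∈ D := hγm hs
  have hv : γ t ∈ D := hγm ht
  set dd := bdist D (γ s) with hdd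
  have hdpos : 0 < dd := bdist_pos hD hu
  -- the reparametrized subarc σ₀
  set ψ : ℝ → ℝ := fun r => s + (max 0 (min r 1)) * (t - s) with hψdef
  have hψmono : Monotone ψ := by
    intro p q hpq
    have h1 : max 0 (min p 1) ≤ max 0 (min q 1) :=
      max_le_max le_rfl (min_le_min hpq le_rfl)
    have h2 : (0:ℝ) ≤ t - s := by linarith
    simp only [hψdef]
    nlinarith
  have hψ0 : ψ 0 = s := by simp [hψdef]
  have hψ1 : ψ 1 = t := by simp [hψdef]
  have hψmem : ∀ r, ψ r ∈ Set.Icc s t := by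
    intro r
    have h1 : (0:ℝ) ≤ max 0 (min r 1) := le_max_left _ _
    have h2 : max 0 (min r 1) ≤ 1 := max_le zero_le_one (min_le_right r 1)
    constructor <;> simp only [hψdef] <;> nlinarith
  have hψcont : Continuous ψ := by
    exact continuous_const.add
      ((continuous_const.max (continuous_id.min continuous_const)).mul continuous_const)
  set σ₀ : ℝ → Eucl n := fun r => γ (ψ r) with hσ₀def
  have hσ₀cont : Continuous σ₀ :=
    hγc.comp_continuous hψcont fun r => hst01 (hψmem r)
  have hσ₀path : IsPathIn D (γ s) (γ t) σ₀ := by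
    refine ⟨hσ₀cont.continuousOn, fun r hr => hγm (hst01 (hψmem r)), ?_, ?_⟩
    · show γ (ψ 0) = γ s; rw [hψ0]
    · show γ (ψ 1) = γ t; rw [hψ1]
  have hσ₀rec : Rectifiable σ₀ := by
    have hle : eVariationOn σ₀ (Set.Icc 0 1) ≤ eVariationOn γ (Set.Icc 0 1) :=
      evar_le_of_reparam hψmono (fun r _ => hst01 (hψmem r)) (fun r _ => rfl)
    exact ne_top_of_le_ne_top hrec hle
  -- ρ is at least dd
  set ρ := rhoD D (γ s) (γ t) with hρdef
  have hρset_ne : (rSet D (γ s) (γ t)).Nonempty := ⟨_, σ₀, hσ₀path, rfl⟩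
  have hρ_lb : ∀ L ∈ rSet D (γ s) (γ t), dd ≤ L := by
    rintro L ⟨σ, ⟨hσc, hσm, hσ0, hσ1⟩, rfl⟩
    have hbd : Bornology.IsBounded (σ '' Set.Icc 0 1) :=
      ((isCompact_Icc).image_of_continuousOn hσc).isBounded
    have h1 : dist (γ s) (γ t) ≤ Metric.diam (σ '' Set.Icc 0 1) := by
      apply Metric.dist_le_diam_of_mem hbd
      · rw [← hσ0]; exact Set.mem_image_of_mem σ ⟨le_rfl, zero_le_one⟩
      · rw [← hσ1]; exact Set.mem_image_of_mem σ ⟨zero_le_one, le_rfl⟩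
    have h2 : bdist D (γ t) ≤ bdist D (γ s) + dist (γ t) (γ s) :=
      Metric.infDist_le_infDist_add_dist
    rw [dist_comm] at h2
    rw [hdv] at h2
    linarith
  have hρd : dd ≤ ρ := by
    rw [hρdef, rhoD_eq_sInf]
    exact le_csInf hρset_ne hρ_lb
  have hρ0 : 0 ≤ ρ := hdpos.le.trans hρd
  -- jP bound
  have hjp : jP D (γ s) (γ t) ≤ ρ / dd := by
    rw [jP, min_eq_left huv, ← hρdef]
    have h1 : Real.log (1 + ρ/dd) ≤ (1 + ρ/dd) - 1 :=
      Real.log_le_sub_one_of_pos (by positivity)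
    linarith
  -- bddAbove facts for γ
  have hbdd01 := pSet_bddAbove hD hγc hγm hrec le_rfl zero_le_one le_rfl
  have hbdd0s := pSet_bddAbove hD hγc hγm hrec le_rfl hs0 hs1
  have hbddst := pSet_bddAbove hD hγc hγm hrec hs0 hst ht1
  have hbdd0t := pSet_bddAbove hD hγc hγm hrec le_rfl ht0 ht1
  have hbddt1 := pSet_bddAbove hD hγc hγm hrec ht0 ht1 le_rfl
  set M := dLength (apol D) γ s t with hMdef
  have hsplit : dLength (apol D) γ 0 s + M + dLength (apol D) γ t 1
      ≤ dLength (apol D) γ 0 1 := by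
    have h1 := dLength_superadd (γ := γ) (d := apol D) hs0 hst hbdd0t
    have h2 := dLength_superadd (γ := γ) (d := apol D) ht0 ht1 hbdd01
    rw [← hMdef] at h1
    linarith
  -- M is at most the inner Apollonian distance of the endpoints of the subarc
  have hM_le : ∀ L ∈ iSet D (γ s) (γ t), M ≤ L := by
    rintro L ⟨σ, hσpath, hσrec, rfl⟩
    obtain ⟨hσc, hσm, hσ0, hσ1⟩ := hσpath
    -- reparametrizations
    set φ₁ : ℝ → ℝ := fun r => max 0 (min (2*s*r) s) with hφ₁def
    set φ₂ : ℝ → ℝ := fun r => max 0 (min (4*r - 2) 1) with hφ₂def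
    set φ₃ : ℝ → ℝ := fun r => max t (min (t + (4*r - 3)*(1 - t)) 1) with hφ₃def
    have hφ₁mono : Monotone φ₁ := by
      intro p q hpq
      refine max_le_max le_rfl (min_le_min ?_ le_rfl)
      have := mul_le_mul_of_nonneg_left hpq (by positivity : (0:ℝ) ≤ 2*s)
      linarith
    have hφ₂mono : Monotone φ₂ := by
      intro p q hpq
      exact max_le_max le_rfl (min_le_min (by linarith) le_rfl)
    have hφ₃mono : Monotone φ₃ := by
      intro p q hpq
      refine max_le_max le_rfl (min_le_min ?_ le_rfl)
      have := mul_le_mul_of_nonneg_right (show 4*p-3 ≤ 4*q-3 by linarith)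
        (show (0:ℝ) ≤ 1 - t by linarith)
      linarith
    have hφ₁0 : φ₁ 0 = 0 := by
      simp only [hφ₁def, mul_zero, min_eq_left hs0, max_self]
    have hφ₁half : φ₁ (1/2) = s := by
      simp only [hφ₁def]
      rw [show 2*s*(1/2) = s by ring, min_self, max_eq_right hs0]
    have hφ₂half : φ₂ (1/2) = 0 := by
      simp only [hφ₂def]
      norm_num
    have hφ₂34 : φ₂ (3/4) = 1 := by
      simp only [hφ₂def]
      norm_num
    have hφ₃34 : φ₃ (3/4) = t := by
      simp only [hφ₃def]
      rw [show t + (4*(3/4:ℝ) - 3)*(1 - t) = t by ring, min_eq_left ht1, max_self]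
    have hφ₃1 : φ₃ 1 = 1 := by
      simp only [hφ₃def]
      rw [show t + (4*(1:ℝ) - 3)*(1 - t) = 1 by ring, min_self, max_eq_right ht1]
    have hφ₁mem : ∀ r, φ₁ r ∈ Set.Icc (0:ℝ) 1 := fun r =>
      ⟨le_max_left _ _, max_le zero_le_one ((min_le_right _ _).trans hs1)⟩
    have hφ₂mem : ∀ r, φ₂ r ∈ Set.Icc (0:ℝ) 1 := fun r =>
      ⟨le_max_left _ _, max_le zero_le_one (min_le_right _ _)⟩
    have hφ₃mem : ∀ r, φ₃ r ∈ Set.Icc (0:ℝ) 1 := fun r =>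
      ⟨ht0.trans (le_max_left _ _), max_le ht1 (min_le_right _ _)⟩
    -- the concatenated path τ
    set τ : ℝ → Eucl n := fun r =>
      if r ≤ (1/2:ℝ) then γ (φ₁ r) else if r ≤ (3/4:ℝ) then σ (φ₂ r) else γ (φ₃ r)
      with hτdef
    have hφ₁cont : Continuous φ₁ :=
      continuous_const.max ((continuous_const.mul continuous_id).min continuous_const)
    have hφ₂cont : Continuous φ₂ := by
      apply continuous_const.max
      exact ((continuous_const.mul continuous_id).sub continuous_const).min continuous_const
    have hφ₃cont : Continuous φ₃ := by
      apply continuous_const.max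
      apply Continuous.min _ continuous_const
      exact continuous_const.add
        (((continuous_const.mul continuous_id).sub continuous_const).mul continuous_const)
    have hA : Continuous fun r => γ (φ₁ r) :=
      hγc.comp_continuous hφ₁cont fun r => hφ₁mem r
    have hB : Continuous fun r => σ (φ₂ r) :=
      hσc.comp_continuous hφ₂cont fun r => hφ₂mem r
    have hC : Continuous fun r => γ (φ₃ r) :=
      hγc.comp_continuous hφ₃cont fun r => hφ₃mem r
    have hInner : Continuous fun r => if r ≤ (3/4:ℝ) then σ (φ₂ r) else γ (φ₃ r) := by
      apply Continuous.if_le hB hC continuous_id continuous_const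
      intro r hr
      have hr' : r = (3/4:ℝ) := hr
      rw [hr', hφ₂34, hφ₃34, hσ1]
    have hτcont : Continuous τ := by
      rw [hτdef]
      apply Continuous.if_le hA hInner continuous_id continuous_const
      intro r hr
      have hr' : r = (1/2:ℝ) := hr
      rw [hr', hφ₁half]
      rw [if_pos (by norm_num : (1/2:ℝ) ≤ 3/4), hφ₂half, hσ0]
    have hτm : Set.MapsTo τ (Set.Icc 0 1) D := by
      intro r _
      rw [hτdef]
      simp only
      split_ifs with h1 h2
      · exact hγm (hφ₁mem r)
      · exact hσm (hφ₂mem r)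
      · exact hγm (hφ₃mem r)
    have hτ0 : τ 0 = x := by
      rw [hτdef]
      simp only
      rw [if_pos (by norm_num : (0:ℝ) ≤ 1/2), hφ₁0, hγ0]
    have hτ1 : τ 1 = y := by
      rw [hτdef]
      simp only
      rw [if_neg (by norm_num : ¬ (1:ℝ) ≤ 1/2), if_neg (by norm_num : ¬ (1:ℝ) ≤ 3/4),
        hφ₃1, hγ1]
    have heq1 : ∀ r ∈ Set.Icc (0:ℝ) (1/2), τ r = γ (φ₁ r) := by
      intro r hr
      rw [hτdef]
      simp only
      rw [if_pos hr.2]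
    have heq2 : ∀ r ∈ Set.Icc (1/2:ℝ) (3/4), τ r = σ (φ₂ r) := by
      intro r hr
      rw [hτdef]
      simp only
      by_cases hhalf : r ≤ 1/2
      · have hreq : r = 1/2 := le_antisymm hhalf hr.1
        rw [hreq, if_pos le_rfl, hφ₁half, hφ₂half, hσ0]
      · rw [if_neg hhalf, if_pos hr.2]
    have heq3 : ∀ r ∈ Set.Icc (3/4:ℝ) 1, τ r = γ (φ₃ r) := by
      intro r hr
      rw [hτdef]
      simp only
      have h12 : ¬ r ≤ 1/2 := by
        have := hr.1; intro hcon; linarith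
      by_cases h34 : r ≤ 3/4
      · have hreq : r = 3/4 := le_antisymm h34 hr.1
        rw [hreq, if_neg (by norm_num : ¬ (3/4:ℝ) ≤ 1/2), if_pos le_rfl,
          hφ₂34, hφ₃34, hσ1]
      · rw [if_neg h12, if_neg h34]
    -- rectifiability of τ
    have hvar1 : eVariationOn τ (Set.Icc 0 (1/2)) ≤ eVariationOn γ (Set.Icc 0 1) :=
      evar_le_of_reparam hφ₁mono (fun r _ => hφ₁mem r) heq1
    have hvar2 : eVariationOn τ (Set.Icc (1/2) (3/4)) ≤ eVariationOn σ (Set.Icc 0 1) :=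
      evar_le_of_reparam hφ₂mono (fun r _ => hφ₂mem r) heq2
    have hvar3 : eVariationOn τ (Set.Icc (3/4) 1) ≤ eVariationOn γ (Set.Icc 0 1) :=
      evar_le_of_reparam hφ₃mono (fun r _ => hφ₃mem r) heq3
    have hsum1 := eVariationOn.Icc_add_Icc τ (s := Set.univ)
      (by norm_num : (0:ℝ) ≤ 1/2) (by norm_num : (1/2:ℝ) ≤ 1) (Set.mem_univ _)
    have hsum2 := eVariationOn.Icc_add_Icc τ (s := Set.univ)
      (by norm_num : (1/2:ℝ) ≤ 3/4) (by norm_num : (3/4:ℝ) ≤ 1) (Set.mem_univ _)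
    simp only [Set.univ_inter] at hsum1 hsum2
    have hτrec : Rectifiable τ := by
      show eVariationOn τ (Set.Icc 0 1) ≠ ⊤
      rw [← hsum1, ← hsum2]
      exact ENNReal.add_ne_top.mpr ⟨ne_top_of_le_ne_top hrec hvar1,
        ENNReal.add_ne_top.mpr ⟨ne_top_of_le_ne_top hσrec hvar2,
          ne_top_of_le_ne_top hrec hvar3⟩⟩
    -- dLength of τ pieces
    have hbddσ := pSet_bddAbove hD hσc hσm hσrec le_rfl zero_le_one le_rfl
    have hc4a : dLength (apol D) τ 0 (1/2) ≤ dLength (apol D) γ 0 s :=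
      dLength_reparam (by norm_num) hφ₁mono hφ₁0 hφ₁half heq1 hbdd0s
    have hc4b : dLength (apol D) τ (1/2) (3/4) ≤ dLength (apol D) σ 0 1 :=
      dLength_reparam (by norm_num) hφ₂mono hφ₂half hφ₂34 heq2 hbddσ
    have hc4c : dLength (apol D) τ (3/4) 1 ≤ dLength (apol D) γ t 1 :=
      dLength_reparam (by norm_num) hφ₃mono hφ₃34 hφ₃1 heq3 hbddt1
    -- subadditivity of dLength of τ
    have hbddτ1 := pSet_bddAbove hD hτcont.continuousOn hτm hτrec
      le_rfl (by norm_num) (by norm_num : (1/2:ℝ) ≤ 1)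
    have hbddτ2 := pSet_bddAbove hD hτcont.continuousOn hτm hτrec
      (by norm_num : (0:ℝ) ≤ 1/2) (by norm_num) (by norm_num : (3/4:ℝ) ≤ 1)
    have hbddτ3 := pSet_bddAbove hD hτcont.continuousOn hτm hτrec
      (by norm_num : (0:ℝ) ≤ 3/4) (by norm_num) le_rfl
    have hbddτ4 := pSet_bddAbove hD hτcont.continuousOn hτm hτrec
      (by norm_num : (0:ℝ) ≤ 1/2) (by norm_num : (1/2:ℝ) ≤ 1) le_rfl
    have htri1 : ∀ p q : ℝ, p ∈ Set.Icc (0:ℝ) (1/2) → q ∈ Set.Icc (1/2:ℝ) 1 →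
        apol D (τ p) (τ q) ≤ apol D (τ p) (τ (1/2)) + apol D (τ (1/2)) (τ q) := by
      intro p q hp hq
      exact apol_triangle hD (hτm ⟨hp.1, hp.2.trans (by norm_num)⟩)
        (hτm ⟨by norm_num, by norm_num⟩) (hτm ⟨(by norm_num : (0:ℝ) ≤ 1/2).trans hq.1, hq.2⟩)
    have htri2 : ∀ p q : ℝ, p ∈ Set.Icc (1/2:ℝ) (3/4) → q ∈ Set.Icc (3/4:ℝ) 1 →
        apol D (τ p) (τ q) ≤ apol D (τ p) (τ (3/4)) + apol D (τ (3/4)) (τ q) := by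
      intro p q hp hq
      exact apol_triangle hD (hτm ⟨(by norm_num : (0:ℝ) ≤ 1/2).trans hp.1,
        hp.2.trans (by norm_num)⟩) (hτm ⟨by norm_num, by norm_num⟩)
        (hτm ⟨(by norm_num : (0:ℝ) ≤ 3/4).trans hq.1, hq.2⟩)
    have hself1 : apol D (τ (1/2)) (τ (1/2)) = 0 :=
      apol_self hD (hτm ⟨by norm_num, by norm_num⟩)
    have hself2 : apol D (τ (3/4)) (τ (3/4)) = 0 :=
      apol_self hD (hτm ⟨by norm_num, by norm_num⟩)
    have hsub1 : dLength (apol D) τ 0 1 ≤ dLength (apol D) τ 0 (1/2)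
        + dLength (apol D) τ (1/2) 1 :=
      dLength_subadd (by norm_num) (by norm_num) htri1 hself1 hbddτ1 hbddτ4
    have hsub2 : dLength (apol D) τ (1/2) 1 ≤ dLength (apol D) τ (1/2) (3/4)
        + dLength (apol D) τ (3/4) 1 :=
      dLength_subadd (by norm_num) (by norm_num) htri2 hself2 hbddτ2 hbddτ3
    -- inner Apollonian distance is at most length of τ
    have hinner_le : innerApol D x y ≤ dLength (apol D) τ 0 1 := by
      rw [innerApol_eq_sInf]
      exact csInf_le (iSet_bddBelow hD x y)
        ⟨τ, ⟨hτcont.continuousOn, hτm, hτ0, hτ1⟩, hτrec, rfl⟩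
    rw [← hopt] at hinner_le
    linarith
  have hMinner : M ≤ innerApol D (γ s) (γ t) := by
    rw [innerApol_eq_sInf]
    exact le_csInf ⟨_, σ₀, hσ₀path, hσ₀rec, rfl⟩ hM_le
  -- the chain construction along the subarc
  set f : ℝ → ℝ := fun r => dist (γ r) (γ s) with hfdef
  have hfc : ContinuousOn f (Set.Icc s t) :=
    (continuous_id.dist continuous_const).comp_continuousOn (hγc.mono hst01)
  obtain ⟨rstar, hrstar, hrmax⟩ :=
    isCompact_Icc.exists_isMaxOn (Set.nonempty_Icc.mpr hst) hfc
  set R' := dist (γ rstar) (γ s) with hR'def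
  have hR'max : ∀ r ∈ Set.Icc s t, dist (γ r) (γ s) ≤ R' := fun r hr =>
    isMaxOn_iff.mp hrmax r hr
  have hR'0 : 0 ≤ R' := dist_nonneg
  have hrs : s ≤ rstar := hrstar.1
  have hrt : rstar ≤ t := hrstar.2
  have hdiam : Metric.diam (γ '' Set.Icc s t) ≤ 2 * R' := by
    apply Metric.diam_le_of_forall_dist_le (by positivity)
    rintro p ⟨rp, hrp, rfl⟩ q ⟨rq, hrq, rfl⟩
    have h1 := dist_triangle (γ rp) (γ s) (γ rq)
    have h2 := hR'max rp hrp
    have h3 := hR'max rq hrq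
    rw [dist_comm (γ s) (γ rq)] at h1
    linarith
  set N := ⌊R' / (6*dd)⌋₊ with hNdef
  have hNle : 6*dd*(N:ℝ) ≤ R' := by
    have h1 : (N:ℝ) ≤ R'/(6*dd) := Nat.floor_le (by positivity)
    rw [le_div_iff₀ (by positivity)] at h1
    linarith
  have hNgt : R' < 6*dd*((N:ℝ)+1) := by
    have h1 : R'/(6*dd) < (N:ℝ)+1 := Nat.lt_floor_add_one _
    rw [div_lt_iff₀ (by positivity)] at h1
    linarith
  -- hitting points
  set E : ℕ → Set ℝ := fun i => {q | q ∈ Set.Icc s rstar ∧ f q = 6*dd*(i:ℝ)} with hEdef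
  have hfc' : ContinuousOn f (Set.Icc s rstar) :=
    hfc.mono (Set.Icc_subset_Icc le_rfl hrt)
  have hfs : f s = 0 := by simp [hfdef]
  have hEne : ∀ i ≤ N, (E i).Nonempty := by
    intro i hi
    have hmem : 6*dd*(i:ℝ) ∈ Set.Icc (f s) (f rstar) := by
      rw [hfs]
      constructor
      · positivity
      · show 6*dd*(i:ℝ) ≤ R'
        have : (i:ℝ) ≤ (N:ℝ) := by exact_mod_cast hi
        nlinarith
    obtain ⟨q, hq, hfq⟩ := intermediate_value_Icc hrs hfc' hmem
    exact ⟨q, hq, hfq⟩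
  have hEclosed : ∀ i, IsClosed (E i) := by
    intro i
    have : E i = Set.Icc s rstar ∩ f ⁻¹' {6*dd*(i:ℝ)} := rfl
    rw [this]
    exact hfc'.preimage_isClosed_of_isClosed isClosed_Icc isClosed_singleton
  have hEbdd : ∀ i, BddBelow (E i) := fun i => ⟨s, fun q hq => hq.1.1⟩
  set rr : ℕ → ℝ := fun i => sInf (E i) with hrrdef
  have hrrmem : ∀ i ≤ N, rr i ∈ E i := fun i hi =>
    (hEclosed i).csInf_mem (hEne i hi) (hEbdd i)
  have hrricc : ∀ i ≤ N, rr i ∈ Set.Icc s t := fun i hi =>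
    ⟨(hrrmem i hi).1.1, (hrrmem i hi).1.2.trans hrt⟩
  have hrrval : ∀ i ≤ N, dist (γ (rr i)) (γ s) = 6*dd*(i:ℝ) := fun i hi =>
    (hrrmem i hi).2
  have hrr0 : rr 0 = s := by
    have hsE : s ∈ E 0 := ⟨⟨le_rfl, hrs⟩, by simp [hfdef]⟩
    exact le_antisymm (csInf_le (hEbdd 0) hsE) (hrrmem 0 (Nat.zero_le N)).1.1
  have hrrmono : ∀ i j, i ≤ j → j ≤ N → rr i ≤ rr j := by
    intro i j hij hjN
    by_contra hcon
    push_neg at hcon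
    have hji := hrrmem j hjN
    have hcont2 : ContinuousOn f (Set.Icc s (rr j)) :=
      hfc'.mono (Set.Icc_subset_Icc le_rfl hji.1.2)
    have hval : 6*dd*(i:ℝ) ∈ Set.Icc (f s) (f (rr j)) := by
      rw [hfs, hji.2]
      constructor
      · positivity
      · have : (i:ℝ) ≤ (j:ℝ) := by exact_mod_cast hij
        nlinarith
    obtain ⟨q, hq, hfq⟩ := intermediate_value_Icc hji.1.1 hcont2 hval
    have hqE : q ∈ E i := ⟨⟨hq.1, hq.2.trans hji.1.2⟩, hfq⟩
    have := csInf_le (hEbdd i) hqE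
    have hq2 := hq.2
    simp only [hrrdef] at hcon this hq2
    linarith
  -- each chain step has apol-length at least 2 log 2
  have hstep : ∀ i < N, 2*Real.log 2 ≤ apol D (γ (rr i)) (γ (rr (i+1))) := by
    intro i hi
    have hiN : i ≤ N := hi.le
    have hi1N : i + 1 ≤ N := hi
    have hpD : γ (rr i) ∈ D := hγm (hst01 (hrricc i hiN))
    have hqD : γ (rr (i+1)) ∈ D := hγm (hst01 (hrricc (i+1) hi1N))
    have hdistpq : 6*dd ≤ dist (γ (rr i)) (γ (rr (i+1))) := by
      have h1 := hrrval i hiN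
      have h2 := hrrval (i+1) hi1N
      have h3 := abs_dist_sub_le (γ (rr (i+1))) (γ (rr i)) (γ s)
      rw [abs_le] at h3
      have h4 := h3.2
      rw [h1, h2] at h4
      rw [dist_comm]
      push_cast at h4
      linarith
    have hp2 : bdist D (γ (rr i)) ≤ 2*dd := hw (rr i) (hrricc i hiN)
    have hq2 : bdist D (γ (rr (i+1))) ≤ 2*dd := hw (rr (i+1)) (hrricc (i+1) hi1N)
    have hppos : 0 < bdist D (γ (rr i)) := bdist_pos hD hpD
    have hqpos : 0 < bdist D (γ (rr (i+1))) := bdist_pos hD hqD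
    obtain ⟨bb, hbbf, hbbd⟩ := isClosed_frontier.exists_infDist_eq_dist
      (frontier_nonempty' hD) (γ (rr i))
    obtain ⟨aa, haaf, haad⟩ := isClosed_frontier.exists_infDist_eq_dist
      (frontier_nonempty' hD) (γ (rr (i+1)))
    have hbbp : dist bb (γ (rr i)) ≤ 2*dd := by
      rw [dist_comm, ← hbbd]; exact hp2
    have haaq : dist aa (γ (rr (i+1))) ≤ 2*dd := by
      rw [dist_comm, ← haad]; exact hq2
    have haap : 4*dd ≤ dist aa (γ (rr i)) := by
      have h1 := dist_triangle (γ (rr i)) aa (γ (rr (i+1)))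
      rw [dist_comm (γ (rr i)) aa] at h1
      linarith
    have hbbq : 4*dd ≤ dist bb (γ (rr (i+1))) := by
      have h1 := dist_triangle (γ (rr i)) bb (γ (rr (i+1)))
      rw [dist_comm (γ (rr i)) bb] at h1
      linarith
    have haaqpos : 0 < dist aa (γ (rr (i+1))) := dist_frontier_pos hD haaf hqD
    have hbbppos : 0 < dist bb (γ (rr i)) := dist_frontier_pos hD hbbf hpD
    have hratio : (4:ℝ) ≤ (dist aa (γ (rr i)) * dist bb (γ (rr (i+1))))
        / (dist aa (γ (rr (i+1))) * dist bb (γ (rr i))) := by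
      rw [le_div_iff₀ (by positivity)]
      nlinarith [mul_le_mul haaq hbbp hbbppos.le (by positivity : (0:ℝ) ≤ 2*dd),
        mul_le_mul haap hbbq (by positivity : (0:ℝ) ≤ 4*dd)
          (le_trans (by positivity) haap)]
    have hkey := apol_ge_log hD hpD hqD haaf hbbf
    have hlog4 : Real.log 4 ≤ Real.log ((dist aa (γ (rr i)) * dist bb (γ (rr (i+1))))
        / (dist aa (γ (rr (i+1))) * dist bb (γ (rr i)))) :=
      Real.log_le_log (by norm_num) hratio
    have h4eq : Real.log 4 = 2*Real.log 2 := by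
      rw [show (4:ℝ) = 2^2 by norm_num, Real.log_pow]
      push_cast; ring
    linarith
  -- the chain partition gives a lower bound for M
  have hNM : (N:ℝ) * (2*Real.log 2) ≤ M := by
    set part : ℕ → ℝ := fun i => if i ≤ N then rr i else t with hpartdef
    have hpartmono : Monotone part := by
      intro i j hij
      simp only [hpartdef]
      by_cases hiN : i ≤ N <;> by_cases hjN : j ≤ N
      · simpa [hiN, hjN] using hrrmono i j hij hjN
      · simpa [hiN, hjN] using (hrricc i hiN).2
      · omega
      · simp [hiN, hjN]
    have hpart0 : part 0 = s := by simp [hpartdef, Nat.zero_le, hrr0]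
    have hpartend : part (N+1) = t := by simp [hpartdef]
    have hmem : (∑ i ∈ Finset.range (N+1), apol D (γ (part i)) (γ (part (i+1))))
        ∈ pSet (apol D) γ s t := ⟨N+1, part, hpartmono, hpart0, hpartend, rfl⟩
    have hMge : (∑ i ∈ Finset.range (N+1), apol D (γ (part i)) (γ (part (i+1)))) ≤ M := by
      rw [hMdef, dLength_eq_sSup]
      exact le_csSup hbddst hmem
    have hsum_lb : (N:ℝ) * (2*Real.log 2)
        ≤ ∑ i ∈ Finset.range (N+1), apol D (γ (part i)) (γ (part (i+1))) := by
      rw [Finset.sum_range_succ]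
      have hterm : ∀ i ∈ Finset.range N,
          2*Real.log 2 ≤ apol D (γ (part i)) (γ (part (i+1))) := by
        intro i hi
        rw [Finset.mem_range] at hi
        have e1 : part i = rr i := by simp [hpartdef, hi.le]
        have e2 : part (i+1) = rr (i+1) := by simp [hpartdef, (by omega : i+1 ≤ N)]
        rw [e1, e2]
        exact hstep i hi
      have h1 : (N:ℝ) * (2*Real.log 2)
          ≤ ∑ _i ∈ Finset.range N, 2*Real.log 2 := by
        rw [Finset.sum_const, Finset.card_range, nsmul_eq_mul]
      have h2 := Finset.sum_le_sum hterm
      have e3 : part (N+1) = t := hpartend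
      have e4 : part N = rr N := by simp [hpartdef]
      have h3 : 0 ≤ apol D (γ (part N)) (γ (part (N+1))) := by
        rw [e3, e4]
        exact apol_nonneg hD (hγm (hst01 (hrricc N le_rfl))) hv
      linarith
    linarith
  -- put everything together
  have hMc : M ≤ c₂ * (ρ/dd) := by
    have h1 := h (γ s) hu (γ t) hv
    have h2 : c₂ * jP D (γ s) (γ t) ≤ c₂ * (ρ/dd) :=
      mul_le_mul_of_nonneg_left hjp (by linarith)
    linarith
  have hf1 : (N:ℝ) * (2*Real.log 2) * dd ≤ c₂ * ρ := by
    have h1 : (N:ℝ) * (2*Real.log 2) * dd ≤ (c₂ * (ρ/dd)) * dd :=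
      mul_le_mul_of_nonneg_right (le_trans hNM hMc) hdpos.le
    have h2 : (c₂ * (ρ/dd)) * dd = c₂ * ρ := by field_simp
    linarith
  have hl2 : (0.6931471803:ℝ) < Real.log 2 := Real.log_two_gt_d9
  have hm1 : (1:ℤ) ≤ ⌊c₂⌋ := Int.le_floor.mpr (by exact_mod_cast hc₂.le)
  have hm2 : (2:ℝ) ≤ (⌊c₂⌋:ℝ) + 1 := by
    have : (1:ℝ) ≤ (⌊c₂⌋:ℝ) := by exact_mod_cast hm1
    linarith
  have hcm : c₂ ≤ (⌊c₂⌋:ℝ) + 1 := (Int.lt_floor_add_one c₂).le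
  have hNnn : (0:ℝ) ≤ (N:ℝ) := Nat.cast_nonneg N
  have hcρ : 0 ≤ c₂ * ρ := mul_nonneg (by linarith) hρ0
  have k1 : Metric.diam (γ '' Set.Icc s t) ≤ 12*dd*(N:ℝ) + 12*dd := by
    linarith [hdiam, hNgt, show 12*dd*(N:ℝ)+12*dd = 2*(6*dd*((N:ℝ)+1)) from by ring]
  have k2 : 12*dd*(N:ℝ)*Real.log 2 ≤ 6*(c₂*ρ) := by
    linarith [hf1, show 12*dd*(N:ℝ)*Real.log 2 = 6*((N:ℝ)*(2*Real.log 2)*dd) from by ring]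
  have k3 : 12*dd*(N:ℝ) ≤ 9*(c₂*ρ) := by
    have hint : 0 ≤ (12*dd*(N:ℝ)) * (Real.log 2 - 0.6931471803) :=
      mul_nonneg (by positivity) (sub_nonneg.mpr hl2.le)
    nlinarith [k2, hint, hcρ]
  have k4 : Metric.diam (γ '' Set.Icc s t) ≤ 9*(c₂*ρ) + 12*ρ := by
    linarith [k1, k3, hρd]
  have k5 : 9*(c₂*ρ) ≤ 9*(((⌊c₂⌋:ℝ)+1)*ρ) := by
    have := mul_le_mul_of_nonneg_right hcm hρ0
    linarith
  have k6 : 12*ρ ≤ 15*(((⌊c₂⌋:ℝ)+1)*ρ) := by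
    have := mul_le_mul_of_nonneg_right hm2 hρ0
    linarith
  linarith [k4, k5, k6]
end
end

section
/- Let n ≥ 2 and let D ⊊ ℝⁿ be an Apollonian domain satisfying α̃_D(x,y) ≤ c₂ j'_D(x,y) for all x, y ∈ D, for some constant c₂ > 1. Let γ ⊂ D be a path joining two points with α_D(γ) = α̃_D of its endpoints, and let u, v be points of γ (in this order along γ) such that d_D(u) ≤ d_D(v), d_D(v) = 2 d_D(u), and d_D(w) ≤ 2 d_D(u) for all w ∈ γ[u,v]. Then ρ_D(u,v) ≤ (1+b₁)² d_D(u), where b₁ = 24([c₂]+1) and [·] denotes the greatest integer part. -/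
open Set Metric Real

noncomputable section

namespace RhoAux

variable {n : ℕ} {D : Set (Eucl n)}

/-- The defining set of `apol`. -/
def aset (D : Set (Eucl n)) (x y : Eucl n) : Set ℝ :=
  ({r | ∃ a ∈ frontier D, ∃ b ∈ frontier D,
          r = Real.log ((dist a x * dist b y) / (dist a y * dist b x))} ∪
        {r | (¬ Bornology.IsBounded D ∧ ¬ Bornology.IsBounded Dᶜ) ∧
          ((∃ b ∈ frontier D, r = Real.log (dist b y / dist b x)) ∨
           (∃ a ∈ frontier D, r = Real.log (dist a x / dist a y)) ∨ r = 0)})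

lemma apol_eq_sSup (x y : Eucl n) : apol D x y = sSup (aset D x y) := rfl

lemma frontier_nonempty (hD : IsDomainIn D) : (frontier D).Nonempty :=
  nonempty_frontier_iff.mpr ⟨hD.2.1.nonempty, hD.2.2⟩

lemma not_mem_frontier (hD : IsDomainIn D) {z : Eucl n} (hz : z ∈ D) : z ∉ frontier D := by
  intro h
  have := hD.1.inter_frontier_eq
  exact absurd (by exact ⟨hz, h⟩ : z ∈ D ∩ frontier D) (by rw [this]; exact notMem_empty z)

lemma bdist_pos (hD : IsDomainIn D) {z : Eucl n} (hz : z ∈ D) : 0 < bdist D z :=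
  (isClosed_frontier.notMem_iff_infDist_pos (frontier_nonempty hD)).1 (not_mem_frontier hD hz)

lemma bdist_le_dist (hD : IsDomainIn D) {z a : Eucl n} (ha : a ∈ frontier D) :
    bdist D z ≤ dist a z := by
  rw [dist_comm]; exact Metric.infDist_le_dist_of_mem ha

lemma dist_frontier_pos (hD : IsDomainIn D) {z a : Eucl n} (ha : a ∈ frontier D) (hz : z ∈ D) :
    0 < dist a z := lt_of_lt_of_le (bdist_pos hD hz) (bdist_le_dist hD ha)

lemma log_frac_eq {p q r s : ℝ} (hp : 0 < p) (hq : 0 < q) (hr : 0 < r) (hs : 0 < s) :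
    Real.log ((p * q) / (r * s)) = Real.log p + Real.log q - Real.log r - Real.log s := by
  rw [Real.log_div (by positivity) (by positivity), Real.log_mul hp.ne' hq.ne',
    Real.log_mul hr.ne' hs.ne']
  ring

lemma log_ratio_le (hD : IsDomainIn D) {a x y : Eucl n} (ha : a ∈ frontier D)
    (hx : x ∈ D) (hy : y ∈ D) :
    Real.log (dist a x) - Real.log (dist a y) ≤ Real.log (1 + dist x y / bdist D y) := by
  have hax : 0 < dist a x := dist_frontier_pos hD ha hx
  have hay : 0 < dist a y := dist_frontier_pos hD ha hy
  have hbdy : 0 < bdist D y := bdist_pos hD hy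
  rw [← Real.log_div hax.ne' hay.ne']
  apply Real.log_le_log (by positivity)
  rw [div_le_iff₀ hay]
  have h1 : dist a x ≤ dist a y + dist x y := by
    have := dist_triangle a y x
    rw [dist_comm y x] at this; linarith
  have h2 : bdist D y ≤ dist a y := bdist_le_dist hD ha
  have h3 : dist x y ≤ dist x y / bdist D y * dist a y := by
    calc dist x y = dist x y / bdist D y * bdist D y := by field_simp
    _ ≤ dist x y / bdist D y * dist a y := by
        apply mul_le_mul_of_nonneg_left h2 (by positivity)
  nlinarith [dist_nonneg (x := x) (y := y)]

lemma aset_le_bound (hD : IsDomainIn D) {x y : Eucl n} (hx : x ∈ D) (hy : y ∈ D) :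
    ∀ r ∈ aset D x y,
      r ≤ Real.log (1 + dist x y / bdist D y) + Real.log (1 + dist x y / bdist D x) := by
  have hbx : 0 < bdist D x := bdist_pos hD hx
  have hby : 0 < bdist D y := bdist_pos hD hy
  have hl1 : (0:ℝ) ≤ Real.log (1 + dist x y / bdist D y) :=
    Real.log_nonneg (by nlinarith [dist_nonneg (x := x) (y := y), div_nonneg (dist_nonneg (x := x) (y := y)) hby.le])
  have hl2 : (0:ℝ) ≤ Real.log (1 + dist x y / bdist D x) :=
    Real.log_nonneg (by nlinarith [div_nonneg (dist_nonneg (x := x) (y := y)) hbx.le])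
  rintro r (⟨a, ha, b, hb, rfl⟩ | ⟨_, (⟨b, hb, rfl⟩ | ⟨a, ha, rfl⟩ | rfl)⟩)
  · have hax := dist_frontier_pos hD ha hx
    have hay := dist_frontier_pos hD ha hy
    have hbx' := dist_frontier_pos hD hb hx
    have hby' := dist_frontier_pos hD hb hy
    rw [log_frac_eq hax hby' hay hbx']
    have e1 := log_ratio_le hD ha hx hy
    have e2 := log_ratio_le hD hb hy hx
    rw [dist_comm y x] at e2
    linarith
  · have hbx' := dist_frontier_pos hD hb hx
    have hby' := dist_frontier_pos hD hb hy
    rw [Real.log_div hby'.ne' hbx'.ne']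
    have e2 := log_ratio_le hD hb hy hx
    rw [dist_comm y x] at e2
    linarith
  · have hax := dist_frontier_pos hD ha hx
    have hay := dist_frontier_pos hD ha hy
    rw [Real.log_div hax.ne' hay.ne']
    have e1 := log_ratio_le hD ha hx hy
    linarith
  · linarith

lemma aset_bddAbove (hD : IsDomainIn D) {x y : Eucl n} (hx : x ∈ D) (hy : y ∈ D) :
    BddAbove (aset D x y) :=
  ⟨_, fun r hr => aset_le_bound hD hx hy r hr⟩

lemma zero_mem_aset (hD : IsDomainIn D) {x y : Eucl n} (hx : x ∈ D) (hy : y ∈ D) :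
    (0:ℝ) ∈ aset D x y := by
  obtain ⟨a₀, ha₀⟩ := frontier_nonempty hD
  left
  refine ⟨a₀, ha₀, a₀, ha₀, ?_⟩
  have h1 : (dist a₀ x * dist a₀ y) / (dist a₀ y * dist a₀ x) = 1 := by
    rw [mul_comm (dist a₀ y)]
    have h2 := dist_frontier_pos hD ha₀ hx
    have h3 := dist_frontier_pos hD ha₀ hy
    exact div_self (by positivity)
  rw [h1, Real.log_one]

lemma apol_nonneg (hD : IsDomainIn D) {x y : Eucl n} (hx : x ∈ D) (hy : y ∈ D) :
    0 ≤ apol D x y :=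
  le_csSup (aset_bddAbove hD hx hy) (zero_mem_aset hD hx hy)

lemma le_apol (hD : IsDomainIn D) {x y : Eucl n} (hx : x ∈ D) (hy : y ∈ D)
    {r : ℝ} (hr : r ∈ aset D x y) : r ≤ apol D x y :=
  le_csSup (aset_bddAbove hD hx hy) hr

lemma apol_le_linear (hD : IsDomainIn D) {x y : Eucl n} (hx : x ∈ D) (hy : y ∈ D) :
    apol D x y ≤ dist x y / bdist D y + dist x y / bdist D x := by
  have hbx : 0 < bdist D x := bdist_pos hD hx
  have hby : 0 < bdist D y := bdist_pos hD hy
  have h1 : Real.log (1 + dist x y / bdist D y) ≤ dist x y / bdist D y := by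
    have := Real.log_le_sub_one_of_pos (x := 1 + dist x y / bdist D y) (by positivity)
    linarith
  have h2 : Real.log (1 + dist x y / bdist D x) ≤ dist x y / bdist D x := by
    have := Real.log_le_sub_one_of_pos (x := 1 + dist x y / bdist D x) (by positivity)
    linarith
  refine le_trans (csSup_le ⟨0, zero_mem_aset hD hx hy⟩ fun r hr => aset_le_bound hD hx hy r hr) ?_
  linarith

lemma apol_triangle (hD : IsDomainIn D) {x y z : Eucl n} (hx : x ∈ D) (hy : y ∈ D)
    (hz : z ∈ D) : apol D x z ≤ apol D x y + apol D y z := by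
  rw [apol_eq_sSup]
  refine csSup_le ⟨0, zero_mem_aset hD hx hz⟩ ?_
  rintro r (⟨a, ha, b, hb, rfl⟩ | ⟨hub, (⟨b, hb, rfl⟩ | ⟨a, ha, rfl⟩ | rfl)⟩)
  · have hax := dist_frontier_pos hD ha hx
    have hay := dist_frontier_pos hD ha hy
    have haz := dist_frontier_pos hD ha hz
    have hbx := dist_frontier_pos hD hb hx
    have hby := dist_frontier_pos hD hb hy
    have hbz := dist_frontier_pos hD hb hz
    have m1 : Real.log ((dist a x * dist b y) / (dist a y * dist b x)) ≤ apol D x y :=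
      le_apol hD hx hy (Or.inl ⟨a, ha, b, hb, rfl⟩)
    have m2 : Real.log ((dist a y * dist b z) / (dist a z * dist b y)) ≤ apol D y z :=
      le_apol hD hy hz (Or.inl ⟨a, ha, b, hb, rfl⟩)
    rw [log_frac_eq hax hbz haz hbx]
    rw [log_frac_eq hax hby hay hbx] at m1
    rw [log_frac_eq hay hbz haz hby] at m2
    linarith
  · have hbx := dist_frontier_pos hD hb hx
    have hby := dist_frontier_pos hD hb hy
    have hbz := dist_frontier_pos hD hb hz
    have m1 : Real.log (dist b y / dist b x) ≤ apol D x y :=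
      le_apol hD hx hy (Or.inr ⟨hub, Or.inl ⟨b, hb, rfl⟩⟩)
    have m2 : Real.log (dist b z / dist b y) ≤ apol D y z :=
      le_apol hD hy hz (Or.inr ⟨hub, Or.inl ⟨b, hb, rfl⟩⟩)
    rw [Real.log_div hbz.ne' hbx.ne']
    rw [Real.log_div hby.ne' hbx.ne'] at m1
    rw [Real.log_div hbz.ne' hby.ne'] at m2
    linarith
  · have hax := dist_frontier_pos hD ha hx
    have hay := dist_frontier_pos hD ha hy
    have haz := dist_frontier_pos hD ha hz
    have m1 : Real.log (dist a x / dist a y) ≤ apol D x y :=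
      le_apol hD hx hy (Or.inr ⟨hub, Or.inr (Or.inl ⟨a, ha, rfl⟩)⟩)
    have m2 : Real.log (dist a y / dist a z) ≤ apol D y z :=
      le_apol hD hy hz (Or.inr ⟨hub, Or.inr (Or.inl ⟨a, ha, rfl⟩)⟩)
    rw [Real.log_div hax.ne' haz.ne']
    rw [Real.log_div hax.ne' hay.ne'] at m1
    rw [Real.log_div hay.ne' haz.ne'] at m2
    linarith
  · have := apol_nonneg hD hx hy
    have := apol_nonneg hD hy hz
    linarith

lemma apol_ge_log4 (hD : IsDomainIn D) {p q : Eucl n} {δ : ℝ} (hδ : 0 < δ)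
    (hp : p ∈ D) (hq : q ∈ D) (hbp : bdist D p ≤ 2 * δ) (hbq : bdist D q ≤ 2 * δ)
    (hpq : dist p q = 6 * δ) : Real.log 4 ≤ apol D p q := by
  obtain ⟨a, ha, haq⟩ := isClosed_frontier.exists_infDist_eq_dist (frontier_nonempty hD) q
  obtain ⟨b, hb, hbp'⟩ := isClosed_frontier.exists_infDist_eq_dist (frontier_nonempty hD) p
  have haqd : dist a q = bdist D q := by rw [dist_comm]; exact haq.symm
  have hbpd : dist b p = bdist D p := by rw [dist_comm]; exact hbp'.symm
  have haq2 : dist a q ≤ 2 * δ := by rw [haqd]; exact hbq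
  have hbp2 : dist b p ≤ 2 * δ := by rw [hbpd]; exact hbp
  have haqpos : 0 < dist a q := dist_frontier_pos hD ha hq
  have hbppos : 0 < dist b p := dist_frontier_pos hD hb hp
  have hap : 4 * δ ≤ dist a p := by
    have := dist_triangle p q a
    have h' : dist q a = dist a q := dist_comm q a
    have h'' : dist p a = dist a p := dist_comm p a
    linarith [dist_triangle p a q]
  have hbq4 : 4 * δ ≤ dist b q := by
    have h1 := dist_triangle q b p
    have h2 : dist q b = dist b q := dist_comm q b
    have h3 : dist b p = dist p b := dist_comm b p
    have h4 : dist q p = dist p q := dist_comm q p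
    linarith [dist_triangle q p b]
  have mem : Real.log ((dist a p * dist b q) / (dist a q * dist b p)) ∈ aset D p q :=
    Or.inl ⟨a, ha, b, hb, rfl⟩
  refine le_trans ?_ (le_apol hD hp hq mem)
  apply Real.log_le_log (by norm_num)
  rw [le_div_iff₀ (by positivity)]
  have h5 : 16 * δ ^ 2 ≤ dist a p * dist b q := by
    have := mul_le_mul hap hbq4 (by positivity) (le_trans (by positivity) hap)
    nlinarith
  nlinarith


/-! ### Partition sums and `dLength` -/

/-- The defining set of `dLength`. -/
def pSet (dd : Eucl n → Eucl n → ℝ) (γ : ℝ → Eucl n) (a b : ℝ) : Set ℝ :=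
  {s | ∃ (k : ℕ) (t : ℕ → ℝ), Monotone t ∧ t 0 = a ∧ t k = b ∧
        s = ∑ i ∈ Finset.range k, dd (γ (t i)) (γ (t (i + 1)))}

lemma part_mem_Icc {a b : ℝ} {k : ℕ} {t : ℕ → ℝ} (hm : Monotone t) (h0 : t 0 = a)
    (hk : t k = b) {i : ℕ} (hik : i ≤ k) : t i ∈ Set.Icc a b :=
  ⟨h0 ▸ hm (Nat.zero_le i), hk ▸ hm hik⟩

lemma pSet_nonempty {dd : Eucl n → Eucl n → ℝ} {γ : ℝ → Eucl n} {a b : ℝ} (hab : a ≤ b) :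
    (pSet dd γ a b).Nonempty := by
  refine ⟨dd (γ a) (γ b), 1, fun j => if j = 0 then a else b, ?_, by simp, by simp, by simp⟩
  intro i j hij
  dsimp only
  split_ifs with h1 h2
  · exact le_rfl
  · exact hab
  · omega
  · exact le_rfl

lemma pSet_nonneg (hD : IsDomainIn D) {γ : ℝ → Eucl n} {a b : ℝ}
    (hab : a ≤ b) (h0a : 0 ≤ a) (hb1 : b ≤ 1)
    (hmap : Set.MapsTo γ (Set.Icc 0 1) D) : ∀ P ∈ pSet (apol D) γ a b, 0 ≤ P := by
  rintro P ⟨k, t, hm, h0, hk, rfl⟩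
  apply Finset.sum_nonneg
  intro i hi
  rw [Finset.mem_range] at hi
  have hsub : Set.Icc a b ⊆ Set.Icc (0:ℝ) 1 := Set.Icc_subset_Icc h0a hb1
  exact apol_nonneg hD (hmap (hsub (part_mem_Icc hm h0 hk hi.le)))
    (hmap (hsub (part_mem_Icc hm h0 hk hi)))

lemma dLength_eq_sSup (dd : Eucl n → Eucl n → ℝ) (γ : ℝ → Eucl n) (a b : ℝ) :
    dLength dd γ a b = sSup (pSet dd γ a b) := rfl

lemma dLength_nonneg (hD : IsDomainIn D) {γ : ℝ → Eucl n} {a b : ℝ}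
    (hab : a ≤ b) (h0a : 0 ≤ a) (hb1 : b ≤ 1)
    (hmap : Set.MapsTo γ (Set.Icc 0 1) D) : 0 ≤ dLength (apol D) γ a b :=
  Real.sSup_nonneg fun _ hP => pSet_nonneg hD hab h0a hb1 hmap _ hP

/-- boundedness of the partition sums of a rectifiable path. -/
lemma pSet_bddAbove (hD : IsDomainIn D) {γ : ℝ → Eucl n} {a b : ℝ}
    (hγc : ContinuousOn γ (Set.Icc 0 1)) (hmap : Set.MapsTo γ (Set.Icc 0 1) D)
    (hrec : eVariationOn γ (Set.Icc 0 1) ≠ ⊤)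
    (h0a : 0 ≤ a) (hab : a ≤ b) (hb1 : b ≤ 1) :
    BddAbove (pSet (apol D) γ a b) := by
  classical
  have hC : IsCompact (γ '' Set.Icc 0 1) := (isCompact_Icc).image_of_continuousOn hγc
  have hCne : (γ '' Set.Icc 0 1).Nonempty := ⟨γ 0, ⟨0, by norm_num, rfl⟩⟩
  obtain ⟨z₀, hz₀, hmin⟩ := hC.exists_isMinOn hCne
    ((Metric.continuous_infDist_pt (frontier D)).continuousOn)
  have hz₀D : z₀ ∈ D := by obtain ⟨w, hw, rfl⟩ := hz₀; exact hmap hw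
  set δ₀ := bdist D z₀ with hδ₀def
  have hδ₀ : 0 < δ₀ := bdist_pos hD hz₀D
  set V := (eVariationOn γ (Set.Icc 0 1)).toReal with hV
  refine ⟨2 / δ₀ * V, ?_⟩
  rintro P ⟨k, t, hm, h0, hk, rfl⟩
  set T : ℕ → ℝ := fun i => min (t i) b with hT
  have hTm : Monotone T := fun i j hij => min_le_min (hm hij) le_rfl
  have hTmem : ∀ i, T i ∈ Set.Icc (0:ℝ) 1 := by
    intro i
    constructor
    · have : a ≤ T i := by
        have := hTm (Nat.zero_le i)
        simpa [hT, h0, min_eq_left hab] using this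
      linarith
    · exact le_trans (min_le_right _ _) hb1
  have hTeq : ∀ i ≤ k, T i = t i := by
    intro i hik
    simp [hT, min_eq_left (part_mem_Icc hm h0 hk hik).2]
  have hsum : ∑ i ∈ Finset.range k, apol D (γ (t i)) (γ (t (i + 1))) =
      ∑ i ∈ Finset.range k, apol D (γ (T i)) (γ (T (i + 1))) := by
    apply Finset.sum_congr rfl
    intro i hi
    rw [Finset.mem_range] at hi
    rw [hTeq i hi.le, hTeq (i+1) hi]
  rw [hsum]
  have hterm : ∀ i, apol D (γ (T i)) (γ (T (i + 1))) ≤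
      2 / δ₀ * dist (γ (T i)) (γ (T (i + 1))) := by
    intro i
    have hp : γ (T i) ∈ D := hmap (hTmem i)
    have hq : γ (T (i+1)) ∈ D := hmap (hTmem (i+1))
    have h1 := apol_le_linear hD hp hq
    have hbp : δ₀ ≤ bdist D (γ (T i)) := hmin ⟨T i, hTmem i, rfl⟩
    have hbq : δ₀ ≤ bdist D (γ (T (i+1))) := hmin ⟨T (i+1), hTmem (i+1), rfl⟩
    have hd : (0:ℝ) ≤ dist (γ (T i)) (γ (T (i + 1))) := dist_nonneg
    have e1 : dist (γ (T i)) (γ (T (i + 1))) / bdist D (γ (T (i+1)))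
        ≤ dist (γ (T i)) (γ (T (i + 1))) / δ₀ := by gcongr
    have e2 : dist (γ (T i)) (γ (T (i + 1))) / bdist D (γ (T i))
        ≤ dist (γ (T i)) (γ (T (i + 1))) / δ₀ := by gcongr
    calc apol D (γ (T i)) (γ (T (i+1))) ≤ _ := h1
    _ ≤ dist (γ (T i)) (γ (T (i + 1))) / δ₀ + dist (γ (T i)) (γ (T (i + 1))) / δ₀ := by
        linarith
    _ = 2 / δ₀ * dist (γ (T i)) (γ (T (i + 1))) := by ring
  calc ∑ i ∈ Finset.range k, apol D (γ (T i)) (γ (T (i + 1)))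
      ≤ ∑ i ∈ Finset.range k, 2 / δ₀ * dist (γ (T i)) (γ (T (i + 1))) :=
        Finset.sum_le_sum fun i _ => hterm i
  _ = 2 / δ₀ * ∑ i ∈ Finset.range k, dist (γ (T i)) (γ (T (i + 1))) := by
        rw [Finset.mul_sum]
  _ ≤ 2 / δ₀ * V := by
        have hdsum : ∑ i ∈ Finset.range k, dist (γ (T i)) (γ (T (i + 1))) ≤ V := by
          have hev := eVariationOn.sum_le (f := γ) (n := k) hTm (fun i => hTmem i)
          have heq : ∑ i ∈ Finset.range k, dist (γ (T i)) (γ (T (i + 1)))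
              = (∑ i ∈ Finset.range k, edist (γ (T (i+1))) (γ (T i))).toReal := by
            rw [ENNReal.toReal_sum (fun i _ => edist_ne_top _ _)]
            apply Finset.sum_congr rfl
            intro i _
            rw [dist_comm, dist_edist]
          rw [heq]
          exact ENNReal.toReal_mono hrec hev
        have : (0:ℝ) ≤ 2 / δ₀ := by positivity
        exact mul_le_mul_of_nonneg_left hdsum this

lemma le_dLength (hD : IsDomainIn D) {γ : ℝ → Eucl n} {a b : ℝ}
    (hγc : ContinuousOn γ (Set.Icc 0 1)) (hmap : Set.MapsTo γ (Set.Icc 0 1) D)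
    (hrec : eVariationOn γ (Set.Icc 0 1) ≠ ⊤)
    (h0a : 0 ≤ a) (hab : a ≤ b) (hb1 : b ≤ 1)
    {P : ℝ} (hP : P ∈ pSet (apol D) γ a b) : P ≤ dLength (apol D) γ a b :=
  le_csSup (pSet_bddAbove hD hγc hmap hrec h0a hab hb1) hP


/-! ### additivity properties of `dLength` -/

lemma dLength_superadd (hD : IsDomainIn D) {γ : ℝ → Eucl n} {a b c : ℝ}
    (hγc : ContinuousOn γ (Set.Icc 0 1)) (hmap : Set.MapsTo γ (Set.Icc 0 1) D)
    (hrec : eVariationOn γ (Set.Icc 0 1) ≠ ⊤)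
    (h0a : 0 ≤ a) (hab : a ≤ b) (hbc : b ≤ c) (hc1 : c ≤ 1) :
    dLength (apol D) γ a b + dLength (apol D) γ b c ≤ dLength (apol D) γ a c := by
  classical
  have key : ∀ P₁ ∈ pSet (apol D) γ a b, ∀ P₂ ∈ pSet (apol D) γ b c,
      P₁ + P₂ ∈ pSet (apol D) γ a c := by
    rintro P₁ ⟨k₁, t₁, hm₁, h01, hk1, rfl⟩ P₂ ⟨k₂, t₂, hm₂, h02, hk2, rfl⟩
    refine ⟨k₁ + k₂, fun j => if j < k₁ then t₁ j else t₂ (j - k₁), ?_, ?_, ?_, ?_⟩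
    · intro i j hij
      dsimp only
      split_ifs with hi hj hj
      · exact hm₁ hij
      · calc t₁ i ≤ t₁ k₁ := hm₁ hi.le
        _ = t₂ 0 := by rw [hk1, h02]
        _ ≤ t₂ (j - k₁) := hm₂ (Nat.zero_le _)
      · omega
      · exact hm₂ (by omega)
    · dsimp only
      split_ifs with h
      · exact h01
      · have hk0 : k₁ = 0 := by omega
        have hb' : t₂ (0 - k₁) = b := by rw [hk0]; simpa using h02
        have hba : b = a := by rw [← h01]; rw [hk0] at hk1; exact hk1.symm
        rw [hb', hba]
    · dsimp only
      split_ifs with h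
      · omega
      · rw [Nat.add_sub_cancel_left]; exact hk2
    · rw [Finset.sum_range_add]
      congr 1
      · apply Finset.sum_congr rfl
        intro i hi
        rw [Finset.mem_range] at hi
        have e1 : (if i < k₁ then t₁ i else t₂ (i - k₁)) = t₁ i := if_pos hi
        have e2 : (if i + 1 < k₁ then t₁ (i+1) else t₂ (i + 1 - k₁)) = t₁ (i+1) := by
          by_cases h : i + 1 < k₁
          · exact if_pos h
          · have : i + 1 = k₁ := by omega
            rw [if_neg h, this, Nat.sub_self, h02, hk1]
        simp only [e1, e2]
      · apply Finset.sum_congr rfl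
        intro i hi
        rw [Finset.mem_range] at hi
        have e1 : (if k₁ + i < k₁ then t₁ (k₁ + i) else t₂ (k₁ + i - k₁)) = t₂ i := by
          rw [if_neg (by omega)]; congr 1; omega
        have e2 : (if k₁ + i + 1 < k₁ then t₁ (k₁ + i + 1) else t₂ (k₁ + i + 1 - k₁))
            = t₂ (i + 1) := by
          rw [if_neg (by omega)]; congr 1; omega
        simp only [e1, e2]
  have hb3 := pSet_bddAbove hD hγc hmap hrec h0a (hab.trans hbc) hc1
  have hne1 := pSet_nonempty (dd := apol D) (γ := γ) hab
  have hne2 := pSet_nonempty (dd := apol D) (γ := γ) hbc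
  rw [dLength_eq_sSup, dLength_eq_sSup, dLength_eq_sSup]
  have main : sSup (pSet (apol D) γ a b) ≤ sSup (pSet (apol D) γ a c)
      - sSup (pSet (apol D) γ b c) := by
    refine csSup_le hne1 fun P₁ hP₁ => ?_
    have h2 : sSup (pSet (apol D) γ b c) ≤ sSup (pSet (apol D) γ a c) - P₁ := by
      refine csSup_le hne2 fun P₂ hP₂ => ?_
      have := le_csSup hb3 (key _ hP₁ _ hP₂)
      linarith
    linarith
  linarith

lemma dLength_subadd (hD : IsDomainIn D) {γ : ℝ → Eucl n} {a b c : ℝ}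
    (hγc : ContinuousOn γ (Set.Icc 0 1)) (hmap : Set.MapsTo γ (Set.Icc 0 1) D)
    (hrec : eVariationOn γ (Set.Icc 0 1) ≠ ⊤)
    (h0a : 0 ≤ a) (hab : a ≤ b) (hbc : b ≤ c) (hc1 : c ≤ 1) :
    dLength (apol D) γ a c ≤ dLength (apol D) γ a b + dLength (apol D) γ b c := by
  classical
  rw [dLength_eq_sSup]
  refine csSup_le (pSet_nonempty (hab.trans hbc)) ?_
  rintro P ⟨k, t, hm, h0, hk, rfl⟩
  have hIcc : Set.Icc a c ⊆ Set.Icc (0:ℝ) 1 := Set.Icc_subset_Icc h0a hc1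
  have hptD : ∀ i ≤ k, γ (t i) ∈ D := fun i hik => hmap (hIcc (part_mem_Icc hm h0 hk hik))
  have hbD : γ b ∈ D := hmap (hIcc ⟨hab, hbc⟩)
  set T₁ : ℕ → ℝ := fun j => min (t j) b with hT₁
  set T₂ : ℕ → ℝ := fun j => max (t j) b with hT₂
  have hm₁ : Monotone T₁ := fun i j hij => min_le_min (hm hij) le_rfl
  have hm₂ : Monotone T₂ := fun i j hij => max_le_max (hm hij) le_rfl
  have mem1 : (∑ i ∈ Finset.range k, apol D (γ (T₁ i)) (γ (T₁ (i+1)))) ∈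
      pSet (apol D) γ a b :=
    ⟨k, T₁, hm₁, by simp [hT₁, h0, min_eq_left hab], by simp [hT₁, hk, min_eq_right hbc], rfl⟩
  have mem2 : (∑ i ∈ Finset.range k, apol D (γ (T₂ i)) (γ (T₂ (i+1)))) ∈
      pSet (apol D) γ b c :=
    ⟨k, T₂, hm₂, by simp [hT₂, h0, max_eq_right hab], by simp [hT₂, hk, max_eq_left hbc], rfl⟩
  have hterm : ∀ i < k, apol D (γ (t i)) (γ (t (i+1))) ≤
      apol D (γ (T₁ i)) (γ (T₁ (i+1))) + apol D (γ (T₂ i)) (γ (T₂ (i+1))) := by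
    intro i hi
    have hpD := hptD i hi.le
    have hqD := hptD (i+1) hi
    by_cases h1 : t (i+1) ≤ b
    · have e1 : T₁ i = t i := min_eq_left (le_trans (hm (Nat.le_succ i)) h1)
      have e2 : T₁ (i+1) = t (i+1) := min_eq_left h1
      have e3 : T₂ i = b := max_eq_right (le_trans (hm (Nat.le_succ i)) h1)
      have e4 : T₂ (i+1) = b := max_eq_right h1
      rw [e1, e2, e3, e4]
      exact le_add_of_nonneg_right (apol_nonneg hD hbD hbD)
    · by_cases h2 : b ≤ t i
      · have e1 : T₁ i = b := min_eq_right h2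
        have e2 : T₁ (i+1) = b := min_eq_right (le_trans h2 (hm (Nat.le_succ i)))
        have e3 : T₂ i = t i := max_eq_left h2
        have e4 : T₂ (i+1) = t (i+1) := max_eq_left (le_trans h2 (hm (Nat.le_succ i)))
        rw [e1, e2, e3, e4]
        exact le_add_of_nonneg_left (apol_nonneg hD hbD hbD)
      · push_neg at h1 h2
        have e1 : T₁ i = t i := min_eq_left h2.le
        have e2 : T₁ (i+1) = b := min_eq_right h1.le
        have e3 : T₂ i = b := max_eq_right h2.le
        have e4 : T₂ (i+1) = t (i+1) := max_eq_left h1.le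
        rw [e1, e2, e3, e4]
        exact apol_triangle hD hpD hbD hqD
  calc ∑ i ∈ Finset.range k, apol D (γ (t i)) (γ (t (i+1)))
      ≤ ∑ i ∈ Finset.range k, (apol D (γ (T₁ i)) (γ (T₁ (i+1)))
        + apol D (γ (T₂ i)) (γ (T₂ (i+1)))) := by
        apply Finset.sum_le_sum
        intro i hi
        exact hterm i (Finset.mem_range.mp hi)
  _ = (∑ i ∈ Finset.range k, apol D (γ (T₁ i)) (γ (T₁ (i+1))))
      + ∑ i ∈ Finset.range k, apol D (γ (T₂ i)) (γ (T₂ (i+1))) := Finset.sum_add_distrib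
  _ ≤ dLength (apol D) γ a b + dLength (apol D) γ b c := by
      apply add_le_add
      · exact le_dLength hD hγc hmap hrec h0a hab (hbc.trans hc1) mem1
      · exact le_dLength hD hγc hmap hrec (h0a.trans hab) hbc hc1 mem2

lemma pSet_congr {dd : Eucl n → Eucl n → ℝ} {γ γ' : ℝ → Eucl n} {a b : ℝ}
    (h : Set.EqOn γ γ' (Set.Icc a b)) : pSet dd γ a b = pSet dd γ' a b := by
  have aux : ∀ (f g : ℝ → Eucl n), Set.EqOn f g (Set.Icc a b) →
      pSet dd f a b ⊆ pSet dd g a b := by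
    rintro f g hfg P ⟨k, t, hm, h0, hk, rfl⟩
    refine ⟨k, t, hm, h0, hk, ?_⟩
    apply Finset.sum_congr rfl
    intro i hi
    rw [Finset.mem_range] at hi
    rw [hfg (part_mem_Icc hm h0 hk hi.le), hfg (part_mem_Icc hm h0 hk hi)]
  exact le_antisymm (aux _ _ h) (aux _ _ fun x hx => (h hx).symm)

lemma pSet_reparam {dd : Eucl n → Eucl n → ℝ} {σ : ℝ → Eucl n} {s t : ℝ} (hst : s < t) :
    pSet dd (fun r => σ ((r - s) / (t - s))) s t = pSet dd σ 0 1 := by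
  have ht : (0:ℝ) < t - s := sub_pos.2 hst
  have hφψ : ∀ y : ℝ, (s + y * (t - s) - s) / (t - s) = y := by
    intro y; field_simp; ring
  ext P
  constructor
  · rintro ⟨k, T, hm, h0, hk, rfl⟩
    refine ⟨k, fun j => (T j - s) / (t - s), ?_, ?_, ?_, rfl⟩
    · intro i j hij
      have h1 := sub_le_sub_right (hm hij) s
      exact (div_le_div_iff_of_pos_right ht).mpr h1
    · dsimp only; rw [h0, sub_self, zero_div]
    · dsimp only; rw [hk, div_self ht.ne']
  · rintro ⟨k, u, hm, h0, hk, rfl⟩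
    refine ⟨k, fun j => s + u j * (t - s), ?_, ?_, ?_, ?_⟩
    · intro i j hij
      dsimp only
      have := mul_le_mul_of_nonneg_right (hm hij) ht.le
      linarith
    · dsimp only; rw [h0]; ring
    · dsimp only; rw [hk]; ring
    · apply Finset.sum_congr rfl
      intro i _
      simp only [hφψ]

lemma evar_split (f : ℝ → Eucl n) {a b c : ℝ} (hab : a ≤ b) (hbc : b ≤ c) :
    eVariationOn f (Set.Icc a b) + eVariationOn f (Set.Icc b c)
      = eVariationOn f (Set.Icc a c) := by
  have h := eVariationOn.Icc_add_Icc f (s := Set.Icc a c) hab hbc ⟨hab, hbc⟩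
  have h1 : Set.Icc a c ∩ Set.Icc a b = Set.Icc a b :=
    Set.inter_eq_right.mpr (Set.Icc_subset_Icc le_rfl hbc)
  have h2 : Set.Icc a c ∩ Set.Icc b c = Set.Icc b c :=
    Set.inter_eq_right.mpr (Set.Icc_subset_Icc hab le_rfl)
  have h3 : Set.Icc a c ∩ Set.Icc a c = Set.Icc a c := Set.inter_self _
  rw [h1, h2, h3] at h
  exact h


/-! ### pasting continuity -/

lemma continuousOn_union_closed {E : Type*} [TopologicalSpace E] {f : ℝ → E} {A B : Set ℝ}
    (hA : IsClosed A) (hB : IsClosed B) (hfA : ContinuousOn f A) (hfB : ContinuousOn f B) :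
    ContinuousOn f (A ∪ B) := by
  intro x hx
  have hwA : ContinuousWithinAt f A x := by
    by_cases h : x ∈ A
    · exact hfA x h
    · exact continuousWithinAt_of_notMem_closure (by rwa [hA.closure_eq])
  have hwB : ContinuousWithinAt f B x := by
    by_cases h : x ∈ B
    · exact hfB x h
    · exact continuousWithinAt_of_notMem_closure (by rwa [hB.closure_eq])
  exact hwA.union hwB

/-! ### the gluing argument: subarcs of `apol`-minimizers are minimizers -/

lemma dLength_sub_le_of_competitor (hD : IsDomainIn D) {γ : ℝ → Eucl n} {x y : Eucl n}
    (hγ : IsPathIn D x y γ) (hrec : Rectifiable γ)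
    {s t : ℝ} (hs : s ∈ Set.Icc (0:ℝ) 1) (ht : t ∈ Set.Icc (0:ℝ) 1) (hst : s < t)
    {σ : ℝ → Eucl n} (hσ : IsPathIn D (γ s) (γ t) σ) (hσrec : Rectifiable σ)
    (hopt : dLength (apol D) γ 0 1 = innerApol D x y) :
    dLength (apol D) γ s t ≤ dLength (apol D) σ 0 1 := by
  obtain ⟨hγc, hγmap, hγ0, hγ1⟩ := hγ
  obtain ⟨hσc, hσmap, hσ0, hσ1⟩ := hσ
  have hts : (0:ℝ) < t - s := sub_pos.2 hst
  set φ : ℝ → ℝ := fun r => (r - s) / (t - s) with hφdef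
  have hφmaps : ∀ r ∈ Set.Icc s t, φ r ∈ Set.Icc (0:ℝ) 1 := by
    intro r hr
    constructor
    · exact div_nonneg (by linarith [hr.1]) hts.le
    · rw [div_le_one hts]; linarith [hr.2]
  set γ' : ℝ → Eucl n := fun r => if r ∈ Set.Icc s t then σ (φ r) else γ r with hγ'def
  have hEq1 : Set.EqOn γ' γ (Set.Icc 0 s) := by
    intro r hr
    simp only [hγ'def]
    split_ifs with h
    · have : r = s := le_antisymm hr.2 h.1
      subst this
      rw [show φ r = 0 by simp only [hφdef]; rw [sub_self, zero_div], hσ0]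
    · rfl
  have hEq2 : Set.EqOn γ' (fun r => σ (φ r)) (Set.Icc s t) := by
    intro r hr; simp only [hγ'def]; rw [if_pos hr]
  have hEq3 : Set.EqOn γ' γ (Set.Icc t 1) := by
    intro r hr
    simp only [hγ'def]
    split_ifs with h
    · have : r = t := le_antisymm h.2 hr.1
      subst this
      rw [show φ r = 1 by simp only [hφdef]; rw [div_self hts.ne'], hσ1]
    · rfl
  have hφc : Continuous φ := (continuous_id.sub continuous_const).div_const _
  have hc1 : ContinuousOn γ' (Set.Icc 0 s) :=
    (hγc.mono (Set.Icc_subset_Icc le_rfl hs.2)).congr hEq1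
  have hc2 : ContinuousOn γ' (Set.Icc s t) := by
    refine ContinuousOn.congr ?_ hEq2
    exact hσc.comp hφc.continuousOn hφmaps
  have hc3 : ContinuousOn γ' (Set.Icc t 1) :=
    (hγc.mono (Set.Icc_subset_Icc ht.1 le_rfl)).congr hEq3
  have hsub : Set.Icc (0:ℝ) 1 ⊆ (Set.Icc 0 s ∪ Set.Icc s t) ∪ Set.Icc t 1 := by
    intro r hr
    by_cases h1 : r ≤ s
    · exact Or.inl (Or.inl ⟨hr.1, h1⟩)
    · by_cases h2 : r ≤ t
      · exact Or.inl (Or.inr ⟨le_of_not_ge h1, h2⟩)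
      · exact Or.inr ⟨le_of_not_ge h2, hr.2⟩
  have hγ'c : ContinuousOn γ' (Set.Icc 0 1) := by
    refine ContinuousOn.mono ?_ hsub
    exact continuousOn_union_closed (isClosed_Icc.union isClosed_Icc) isClosed_Icc
      (continuousOn_union_closed isClosed_Icc isClosed_Icc hc1 hc2) hc3
  have hγ'map : Set.MapsTo γ' (Set.Icc 0 1) D := by
    intro r hr
    simp only [hγ'def]
    split_ifs with h
    · exact hσmap (hφmaps r h)
    · exact hγmap hr
  have hγ'0 : γ' 0 = x := by
    rw [hEq1 ⟨le_rfl, hs.1⟩, hγ0]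
  have hγ'1 : γ' 1 = y := by
    rw [hEq3 ⟨ht.2, le_rfl⟩, hγ1]
  have hvar1 : eVariationOn γ' (Set.Icc 0 s) ≠ ⊤ := by
    rw [eVariationOn.eq_of_eqOn hEq1]
    exact fun h => hrec (top_le_iff.mp (h ▸ eVariationOn.mono γ (Set.Icc_subset_Icc le_rfl hs.2)))
  have hvar3 : eVariationOn γ' (Set.Icc t 1) ≠ ⊤ := by
    rw [eVariationOn.eq_of_eqOn hEq3]
    exact fun h => hrec (top_le_iff.mp (h ▸ eVariationOn.mono γ (Set.Icc_subset_Icc ht.1 le_rfl)))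
  have hvar2 : eVariationOn γ' (Set.Icc s t) ≠ ⊤ := by
    rw [eVariationOn.eq_of_eqOn hEq2]
    have hmono : MonotoneOn φ (Set.Icc s t) := by
      intro p hp q hq hpq
      exact (div_le_div_iff_of_pos_right hts).mpr (sub_le_sub_right hpq s)
    have hcomp := eVariationOn.comp_eq_of_monotoneOn σ φ hmono
    have : eVariationOn (σ ∘ φ) (Set.Icc s t) ≤ eVariationOn σ (Set.Icc 0 1) := by
      rw [hcomp]
      exact eVariationOn.mono σ (by
        rintro _ ⟨r, hr, rfl⟩
        exact hφmaps r hr)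
    exact fun h => hσrec (top_le_iff.mp (h ▸ this))
  have hγ'rec : Rectifiable γ' := by
    unfold Rectifiable
    rw [← evar_split γ' hs.1 (le_trans hst.le ht.2), ← evar_split γ' hst.le ht.2]
    intro htop
    rw [ENNReal.add_eq_top] at htop
    rcases htop with h | h
    · exact hvar1 h
    · rw [ENNReal.add_eq_top] at h
      rcases h with h | h
      · exact hvar2 h
      · exact hvar3 h
  -- innerApol x y ≤ dLength γ' 0 1
  have hbddBelow : BddBelow {L | ∃ σ' : ℝ → Eucl n,
      IsPathIn D x y σ' ∧ Rectifiable σ' ∧ L = dLength (apol D) σ' 0 1} := by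
    refine ⟨0, ?_⟩
    rintro L ⟨σ', hσ'p, hσ'r, rfl⟩
    exact dLength_nonneg hD zero_le_one le_rfl le_rfl hσ'p.2.1
  have hinnerle : innerApol D x y ≤ dLength (apol D) γ' 0 1 :=
    csInf_le hbddBelow ⟨γ', ⟨hγ'c, hγ'map, hγ'0, hγ'1⟩, hγ'rec, rfl⟩
  -- splitting for γ'
  have hsplit1 : dLength (apol D) γ' 0 1 ≤ dLength (apol D) γ' 0 t + dLength (apol D) γ' t 1 :=
    dLength_subadd hD hγ'c hγ'map hγ'rec le_rfl (le_trans hs.1 hst.le) ht.2 le_rfl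
  have hsplit2 : dLength (apol D) γ' 0 t ≤ dLength (apol D) γ' 0 s + dLength (apol D) γ' s t :=
    dLength_subadd hD hγ'c hγ'map hγ'rec le_rfl hs.1 hst.le ht.2
  -- identification of the pieces
  have hid1 : dLength (apol D) γ' 0 s = dLength (apol D) γ 0 s := by
    rw [dLength_eq_sSup, dLength_eq_sSup, pSet_congr hEq1]
  have hid3 : dLength (apol D) γ' t 1 = dLength (apol D) γ t 1 := by
    rw [dLength_eq_sSup, dLength_eq_sSup, pSet_congr hEq3]
  have hid2 : dLength (apol D) γ' s t = dLength (apol D) σ 0 1 := by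
    rw [dLength_eq_sSup, dLength_eq_sSup, pSet_congr hEq2, pSet_reparam hst]
  -- superadditivity for γ
  have hsuper1 : dLength (apol D) γ 0 s + dLength (apol D) γ s t ≤ dLength (apol D) γ 0 t :=
    dLength_superadd hD hγc hγmap hrec le_rfl hs.1 hst.le ht.2
  have hsuper2 : dLength (apol D) γ 0 t + dLength (apol D) γ t 1 ≤ dLength (apol D) γ 0 1 :=
    dLength_superadd hD hγc hγmap hrec le_rfl (le_trans hs.1 hst.le) ht.2 le_rfl
  linarith [hopt ▸ hinnerle]

lemma dLength_sub_le_innerApol (hD : IsDomainIn D) {γ : ℝ → Eucl n} {x y : Eucl n}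
    (hγ : IsPathIn D x y γ) (hrec : Rectifiable γ)
    {s t : ℝ} (hs : s ∈ Set.Icc (0:ℝ) 1) (ht : t ∈ Set.Icc (0:ℝ) 1) (hst : s < t)
    (hopt : dLength (apol D) γ 0 1 = innerApol D x y) :
    dLength (apol D) γ s t ≤ innerApol D (γ s) (γ t) := by
  obtain ⟨hγc, hγmap, hγ0, hγ1⟩ := hγ
  set ψ : ℝ → ℝ := fun r => s + r * (t - s) with hψdef
  have hts : (0:ℝ) < t - s := sub_pos.2 hst
  have hψmaps : ∀ r ∈ Set.Icc (0:ℝ) 1, ψ r ∈ Set.Icc s t := by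
    intro r hr
    constructor
    · simp only [hψdef]
      nlinarith [mul_nonneg hr.1 hts.le]
    · simp only [hψdef]
      nlinarith [mul_le_mul_of_nonneg_right hr.2 hts.le]
  have hψsub : ∀ r ∈ Set.Icc (0:ℝ) 1, ψ r ∈ Set.Icc (0:ℝ) 1 := by
    intro r hr
    have := hψmaps r hr
    exact ⟨le_trans hs.1 this.1, le_trans this.2 ht.2⟩
  have hσ₀path : IsPathIn D (γ s) (γ t) (fun r => γ (ψ r)) := by
    refine ⟨hγc.comp ((continuous_const.add (continuous_id.mul continuous_const)).continuousOn)
      hψsub, fun r hr => hγmap (hψsub r hr), ?_, ?_⟩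
    · show γ (ψ 0) = γ s
      congr 1; simp only [hψdef]; ring
    · show γ (ψ 1) = γ t
      congr 1; simp only [hψdef]; ring
  have hσ₀rec : Rectifiable (fun r => γ (ψ r)) := by
    unfold Rectifiable
    have hmono : MonotoneOn ψ (Set.Icc (0:ℝ) 1) := by
      intro p hp q hq hpq
      simp only [hψdef]
      nlinarith [mul_le_mul_of_nonneg_right hpq hts.le]
    have hcomp := eVariationOn.comp_eq_of_monotoneOn γ ψ hmono
    have hle : eVariationOn (γ ∘ ψ) (Set.Icc 0 1) ≤ eVariationOn γ (Set.Icc 0 1) := by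
      rw [hcomp]
      exact eVariationOn.mono γ (by rintro _ ⟨r, hr, rfl⟩; exact hψsub r hr)
    exact fun h => hrec (top_le_iff.mp (h ▸ hle))
  refine le_csInf ⟨_, (fun r => γ (ψ r)), hσ₀path, hσ₀rec, rfl⟩ ?_
  rintro L ⟨σ, hσp, hσr, rfl⟩
  exact dLength_sub_le_of_competitor hD ⟨hγc, hγmap, hγ0, hγ1⟩ hrec hs ht hst hσp hσr hopt


/-! ### the chain of points at mutual distance `δ'` along a curve of large diameter -/

lemma chain_exists {g : ℝ → Eucl n} {s t : ℝ} (hst : s ≤ t)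
    (hg : ContinuousOn g (Set.Icc s t)) {δ' : ℝ} (hδ' : 0 < δ') (k : ℕ)
    (hdiam : ((k:ℝ) + 2) * δ' < Metric.diam (g '' Set.Icc s t)) :
    ∃ T : ℕ → ℝ, Monotone T ∧ T 0 = s ∧ (∀ i, T i ∈ Set.Icc s t) ∧
      ∀ i < k, dist (g (T i)) (g (T (i+1))) = δ' := by
  have claim : ∀ i, i ≤ k → ∃ T : ℕ → ℝ, Monotone T ∧ T 0 = s ∧
      (∀ j, T j ∈ Set.Icc s t) ∧ (∀ j < i, dist (g (T j)) (g (T (j+1))) = δ') ∧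
      (∀ j, i ≤ j → T j = T i) ∧
      (∀ r ∈ Set.Icc s (T i), ∃ j ≤ i, dist (g r) (g (T j)) ≤ δ') := by
    intro i
    induction i with
    | zero =>
      intro _
      refine ⟨fun _ => s, monotone_const, rfl, fun j => ⟨le_rfl, hst⟩,
        fun j hj => absurd hj (Nat.not_lt_zero j), fun j _ => rfl, ?_⟩
      intro r hr
      have : r = s := le_antisymm hr.2 hr.1
      exact ⟨0, le_rfl, by rw [this]; simp [hδ'.le]⟩
    | succ i ih =>
      intro hik
      obtain ⟨T, hTm, hT0, hTmem, hTd, hTconst, hTcov⟩ := ih (Nat.le_of_succ_le hik)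
      -- there is a point beyond distance δ' from g (T i)
      have hfar : ∃ r' ∈ Set.Icc (T i) t, δ' < dist (g r') (g (T i)) := by
        by_contra hno
        push_neg at hno
        -- chain bound
        have cb : ∀ m j, j + m ≤ i → dist (g (T j)) (g (T (j + m))) ≤ (m:ℝ) * δ' := by
          intro m
          induction m with
          | zero => intro j _; simp
          | succ m ihm =>
            intro j hjm
            have h1 : dist (g (T j)) (g (T (j + m))) ≤ (m:ℝ) * δ' := ihm j (by omega)
            have h2 : dist (g (T (j + m))) (g (T (j + m + 1))) = δ' := hTd _ (by omega)
            calc dist (g (T j)) (g (T (j + (m+1))))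
                ≤ dist (g (T j)) (g (T (j + m))) + dist (g (T (j + m))) (g (T (j + m + 1))) := by
                  have := dist_triangle (g (T j)) (g (T (j + m))) (g (T (j + m + 1)))
                  simpa [show j + (m+1) = j + m + 1 by omega] using this
            _ ≤ (m:ℝ) * δ' + δ' := by rw [h2]; linarith
            _ = ((m:ℝ) + 1) * δ' := by ring
            _ = ((m+1 : ℕ):ℝ) * δ' := by push_cast; ring
        have cb' : ∀ p q, p ≤ i → q ≤ i → dist (g (T p)) (g (T q)) ≤ (i:ℝ) * δ' := by
          intro p q hp hq
          rcases le_total p q with h | h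
          · have := cb (q - p) p (by omega)
            have heq : p + (q - p) = q := by omega
            rw [heq] at this
            refine le_trans this ?_
            have : ((q - p : ℕ):ℝ) ≤ (i:ℝ) := by exact_mod_cast by omega
            nlinarith
          · have := cb (p - q) q (by omega)
            have heq : q + (p - q) = p := by omega
            rw [heq] at this
            rw [dist_comm]
            refine le_trans this ?_
            have : ((p - q : ℕ):ℝ) ≤ (i:ℝ) := by exact_mod_cast by omega
            nlinarith
        have covAll : ∀ r ∈ Set.Icc s t, ∃ j ≤ i, dist (g r) (g (T j)) ≤ δ' := by
          intro r hr
          rcases le_total r (T i) with h | h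
          · exact hTcov r ⟨hr.1, h⟩
          · exact ⟨i, le_rfl, hno r ⟨h, hr.2⟩⟩
        have hdle : Metric.diam (g '' Set.Icc s t) ≤ ((i:ℝ) + 2) * δ' := by
          apply Metric.diam_le_of_forall_dist_le (by positivity)
          rintro _ ⟨r, hr, rfl⟩ _ ⟨r', hr', rfl⟩
          obtain ⟨j, hj, hjd⟩ := covAll r hr
          obtain ⟨j', hj', hjd'⟩ := covAll r' hr'
          have h1 := cb' j j' hj hj'
          calc dist (g r) (g r') ≤ dist (g r) (g (T j)) + dist (g (T j)) (g r') :=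
              dist_triangle _ _ _
          _ ≤ dist (g r) (g (T j)) + (dist (g (T j)) (g (T j'))
              + dist (g (T j')) (g r')) := by linarith [dist_triangle (g (T j)) (g (T j')) (g r')]
          _ ≤ δ' + ((i:ℝ) * δ' + δ') := by
              rw [dist_comm (g (T j')) (g r')]
              linarith
          _ = ((i:ℝ) + 2) * δ' := by ring
        have hik' : ((i:ℝ) + 2) * δ' ≤ ((k:ℝ) + 2) * δ' := by
          have : (i:ℝ) ≤ (k:ℝ) := by exact_mod_cast Nat.le_of_succ_le hik
          nlinarith
        linarith
      obtain ⟨r', hr', hfar'⟩ := hfar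
      set h : ℝ → ℝ := fun r => dist (g r) (g (T i)) with hhdef
      have hTi := hTmem i
      have hsubIcc : Set.Icc (T i) r' ⊆ Set.Icc s t := Set.Icc_subset_Icc hTi.1 hr'.2
      have hhc : ContinuousOn h (Set.Icc (T i) r') := by
        simp only [hhdef]
        exact continuous_dist.comp_continuousOn ((hg.mono hsubIcc).prodMk continuousOn_const)
      have hti0 : h (T i) = 0 := by simp [hhdef]
      have hmem : δ' ∈ Set.Icc (h (T i)) (h r') := ⟨by rw [hti0]; exact hδ'.le, hfar'.le⟩
      obtain ⟨c, hc, hceq⟩ := intermediate_value_Icc hr'.1 hhc hmem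
      set Scr : Set ℝ := Set.Icc (T i) r' ∩ h ⁻¹' {δ'} with hScr
      have hScrClosed : IsClosed Scr :=
        hhc.preimage_isClosed_of_isClosed isClosed_Icc isClosed_singleton
      have hScrne : Scr.Nonempty := ⟨c, hc, hceq⟩
      have hScrBdd : BddBelow Scr := ⟨T i, fun z hz => hz.1.1⟩
      set c₀ := sInf Scr with hc₀def
      have hc₀mem : c₀ ∈ Scr := hScrClosed.csInf_mem hScrne hScrBdd
      have hc₀Icc : c₀ ∈ Set.Icc (T i) r' := hc₀mem.1
      have hc₀eq : h c₀ = δ' := hc₀mem.2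
      have hcovnew : ∀ r ∈ Set.Icc (T i) c₀, h r ≤ δ' := by
        intro r hr
        by_contra hgt
        push_neg at hgt
        have hrb : r ≤ r' := le_trans hr.2 hc₀Icc.2
        have hmem' : δ' ∈ Set.Icc (h (T i)) (h r) := ⟨by rw [hti0]; exact hδ'.le, hgt.le⟩
        obtain ⟨c', hc', hc'eq⟩ := intermediate_value_Icc hr.1 (hhc.mono
          (Set.Icc_subset_Icc le_rfl hrb)) hmem'
        have hc'Scr : c' ∈ Scr := ⟨⟨hc'.1, le_trans hc'.2 hrb⟩, hc'eq⟩
        have h1 : c₀ ≤ c' := csInf_le hScrBdd hc'Scr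
        have h2 : r = c₀ := le_antisymm hr.2 (le_trans h1 hc'.2)
        rw [h2, hc₀eq] at hgt
        exact lt_irrefl _ hgt
      refine ⟨fun j => if j ≤ i then T j else c₀, ?_, ?_, ?_, ?_, ?_, ?_⟩
      · intro p q hpq
        dsimp only
        split_ifs with h1 h2 h2
        · exact hTm hpq
        · exact le_trans (hTm h1) hc₀Icc.1
        · omega
        · exact le_rfl
      · simp [hT0]
      · intro j
        dsimp only
        split_ifs with h1
        · exact hTmem j
        · exact ⟨le_trans hTi.1 hc₀Icc.1, le_trans hc₀Icc.2 hr'.2⟩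
      · intro j hj
        dsimp only
        rcases Nat.lt_succ_iff_lt_or_eq.mp hj with h1 | h1
        · rw [if_pos h1.le, if_pos (Nat.succ_le_of_lt h1)]
          exact hTd j h1
        · subst h1
          rw [if_pos le_rfl, if_neg (by omega)]
          rw [dist_comm]
          exact hc₀eq
      · intro j hj
        dsimp only
        rw [if_neg (by omega), if_neg (by omega)]
      · intro r hr
        dsimp only at hr ⊢
        rw [if_neg (show ¬ (i + 1 ≤ i) by omega)] at hr
        rcases le_total r (T i) with h1 | h1
        · obtain ⟨j, hj, hjd⟩ := hTcov r ⟨hr.1, h1⟩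
          exact ⟨j, by omega, by rw [if_pos hj]; exact hjd⟩
        · refine ⟨i, by omega, ?_⟩
          rw [if_pos le_rfl]
          exact hcovnew r ⟨h1, hr.2⟩
  obtain ⟨T, hTm, hT0, hTmem, hTd, _, _⟩ := claim k le_rfl
  exact ⟨T, hTm, hT0, hTmem, hTd⟩

/-! ### the numeric estimate -/

lemma numeric_contradiction {K M c₂ : ℝ} (hM2 : 2 ≤ M) (hc₂M : c₂ ≤ M) (hc₂1 : 1 < c₂)
    (hK : 96 * M^2 < K) (hineq : (K - 3) * Real.log 4 ≤ c₂ * Real.log (1 + 6*K)) : False := by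
  have hlog4 : (1:ℝ) ≤ Real.log 4 := by
    rw [Real.le_log_iff_exp_le (by norm_num)]
    nlinarith [Real.exp_one_lt_d9]
  have hK0 : (0:ℝ) < K := by nlinarith
  have hK3 : (3:ℝ) ≤ K := by nlinarith
  set S := Real.sqrt K with hS
  have hS0 : 0 ≤ S := Real.sqrt_nonneg K
  have hSK : S^2 = K := Real.sq_sqrt hK0.le
  have hS3 : 3 ≤ S := by
    have h9 : (3:ℝ) = Real.sqrt 9 := by
      rw [show (9:ℝ) = 3^2 by norm_num, Real.sqrt_sq (by norm_num)]
    rw [hS, h9]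
    exact Real.sqrt_le_sqrt (by nlinarith)
  have hS_pos : 0 < S := by linarith
  have hsqrt7 : Real.sqrt 7 ≤ 3 := by
    have h9 : (3:ℝ) = Real.sqrt 9 := by
      rw [show (9:ℝ) = 3^2 by norm_num, Real.sqrt_sq (by norm_num)]
    rw [h9]
    exact Real.sqrt_le_sqrt (by norm_num)
  have hsqrt7nn : 0 ≤ Real.sqrt 7 := Real.sqrt_nonneg 7
  have hlog6K : Real.log (1 + 6*K) ≤ 2 * Real.sqrt 7 * S := by
    have h1 : (0:ℝ) < 1 + 6*K := by nlinarith
    have h2 : Real.log (1 + 6*K) = 2 * Real.log (Real.sqrt (1+6*K)) := by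
      rw [Real.log_sqrt h1.le]; ring
    have h3 : Real.log (Real.sqrt (1+6*K)) ≤ Real.sqrt (1+6*K) - 1 :=
      Real.log_le_sub_one_of_pos (Real.sqrt_pos.mpr h1)
    have h4 : Real.sqrt (1+6*K) ≤ Real.sqrt (7*K) := Real.sqrt_le_sqrt (by nlinarith)
    have h5 : Real.sqrt (7*K) = Real.sqrt 7 * S := Real.sqrt_mul (by norm_num) K
    rw [h5] at h4
    linarith
  have hM0 : (0:ℝ) < M := by linarith
  have key : K - 3 ≤ 6 * M * S := by
    have hlogpos : 0 ≤ Real.log (1+6*K) := Real.log_nonneg (by nlinarith)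
    have h6 : K - 3 ≤ (K - 3) * Real.log 4 := by nlinarith
    have h7 : c₂ * Real.log (1+6*K) ≤ M * (2 * Real.sqrt 7 * S) := by
      have := mul_le_mul hc₂M hlog6K hlogpos hM0.le
      linarith
    have h8 : M * (2 * Real.sqrt 7 * S) ≤ 6 * M * S := by
      have h8' : Real.sqrt 7 * (M*S) ≤ 3*(M*S) :=
        mul_le_mul_of_nonneg_right hsqrt7 (mul_nonneg hM0.le hS0)
      nlinarith [h8']
    linarith
  have hS61 : S ≤ 6*M + 1 := by
    by_contra hgt
    push_neg at hgt
    have h1 : (6*M + 1) * S < S * S := mul_lt_mul_of_pos_right hgt hS_pos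
    have h2 : S * S = K := by nlinarith [hSK]
    nlinarith
  nlinarith [hSK, mul_self_le_mul_self hS0 hS61]

end RhoAux

lemma arith_K96 {M δ Δ K : ℝ} (hM2 : 2 ≤ M) (hδ : 0 < δ) (hKΔ : Δ = K * (6*δ))
    (hcon : (1+24*M)^2 * δ < Δ) : 96 * M^2 < K ∧ (3:ℝ) ≤ K := by
  have h1 : 576 * M^2 * δ ≤ (1+24*M)^2 * δ := by nlinarith
  have h2 : 576 * M^2 * δ < K*(6*δ) := by rw [hKΔ] at hcon; linarith
  have h3 : 96*M^2*(6*δ) < K*(6*δ) := by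
    have he : 96*M^2*(6*δ) = 576*M^2*δ := by ring
    linarith
  have h4 : 96 * M^2 < K := lt_of_mul_lt_mul_right h3 (by positivity)
  exact ⟨h4, by nlinarith⟩

/-- Lemma 2.1(2): Under the hypotheses of Lemma 2.1,
`ρ_D(u,v) ≤ (1+b₁)² d_D(u)` where `b₁ = 24([c₂]+1)`. -/
theorem rho_subarc_le {n : ℕ} (hn : 2 ≤ n) (D : Set (Eucl n)) (hD : IsDomainIn D)
    (hA : IsApollonian D) (c₂ : ℝ) (hc₂ : 1 < c₂)
    (h : ∀ x ∈ D, ∀ y ∈ D, innerApol D x y ≤ c₂ * jP D x y)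
    (x y : Eucl n) (hx : x ∈ D) (hy : y ∈ D) (γ : ℝ → Eucl n)
    (hγ : IsPathIn D x y γ) (hrec : Rectifiable γ)
    (hopt : dLength (apol D) γ 0 1 = innerApol D x y)
    (s t : ℝ) (hs : s ∈ Set.Icc (0:ℝ) 1) (ht : t ∈ Set.Icc (0:ℝ) 1) (hst : s ≤ t)
    (huv : bdist D (γ s) ≤ bdist D (γ t))
    (hdv : bdist D (γ t) = 2 * bdist D (γ s))
    (hw : ∀ r ∈ Set.Icc s t, bdist D (γ r) ≤ 2 * bdist D (γ s)) :
    rhoD D (γ s) (γ t) ≤ (1 + 24 * ((⌊c₂⌋ : ℝ) + 1)) ^ 2 * bdist D (γ s) := by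
  obtain ⟨hγc, hγmap, hγ0, hγ1⟩ := hγ
  have huD : γ s ∈ D := hγmap hs
  have hvD : γ t ∈ D := hγmap ht
  set δ := bdist D (γ s) with hδdef
  have hδ : 0 < δ := RhoAux.bdist_pos hD huD
  set M : ℝ := (⌊c₂⌋ : ℝ) + 1 with hMdef
  have hM2 : 2 ≤ M := by
    have h1 : (1:ℤ) ≤ ⌊c₂⌋ := Int.le_floor.mpr (by exact_mod_cast hc₂.le)
    have h2 : (1:ℝ) ≤ (⌊c₂⌋:ℝ) := by exact_mod_cast h1
    rw [hMdef]; linarith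
  have hc₂M : c₂ ≤ M := (Int.lt_floor_add_one c₂).le
  have hbddρ : BddBelow {L | ∃ σ : ℝ → Eucl n, IsPathIn D (γ s) (γ t) σ ∧
      L = Metric.diam (σ '' Set.Icc 0 1)} := by
    refine ⟨0, ?_⟩
    rintro L ⟨σ, hσ, rfl⟩
    exact Metric.diam_nonneg
  rcases eq_or_lt_of_le hst with heq | hlt
  · -- degenerate case s = t
    have hpath : IsPathIn D (γ s) (γ t) (fun _ => γ s) :=
      ⟨continuousOn_const, fun r _ => huD, rfl, by rw [heq]⟩
    have hd0 : Metric.diam ((fun _ : ℝ => γ s) '' Set.Icc (0:ℝ) 1) = 0 := by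
      have h1 : (fun _ : ℝ => γ s) '' Set.Icc (0:ℝ) 1 = {γ s} :=
        Set.Nonempty.image_const (by norm_num : (Set.Icc (0:ℝ) 1).Nonempty) _
      rw [h1, Metric.diam_singleton]
    have hρ0 : rhoD D (γ s) (γ t) ≤ 0 := csInf_le hbddρ ⟨(fun _ => γ s), hpath, hd0.symm⟩
    have : (0:ℝ) ≤ (1 + 24 * M) ^ 2 * δ := by positivity
    linarith
  · -- main case s < t
    have hts : (0:ℝ) < t - s := sub_pos.2 hlt
    set Δ := Metric.diam (γ '' Set.Icc s t) with hΔdef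
    have hΔ0 : 0 ≤ Δ := Metric.diam_nonneg
    have hψsub : ∀ r ∈ Set.Icc (0:ℝ) 1, s + r * (t - s) ∈ Set.Icc s t := by
      intro r hr
      constructor
      · nlinarith [mul_nonneg hr.1 hts.le]
      · nlinarith [mul_le_mul_of_nonneg_right hr.2 hts.le]
    have hψ01 : ∀ r ∈ Set.Icc (0:ℝ) 1, s + r * (t - s) ∈ Set.Icc (0:ℝ) 1 := fun r hr =>
      ⟨le_trans hs.1 (hψsub r hr).1, le_trans (hψsub r hr).2 ht.2⟩
    have hσ₀path : IsPathIn D (γ s) (γ t) (fun r => γ (s + r * (t - s))) := by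
      refine ⟨hγc.comp ((continuous_const.add (continuous_id.mul continuous_const)).continuousOn)
        hψ01, fun r hr => hγmap (hψ01 r hr), ?_, ?_⟩
      · show γ (s + 0 * (t - s)) = γ s
        norm_num
      · show γ (s + 1 * (t - s)) = γ t
        norm_num
    have hinner_img : (fun r => s + r * (t - s)) '' Set.Icc (0:ℝ) 1 = Set.Icc s t := by
      ext z
      simp only [Set.mem_image, Set.mem_Icc]
      constructor
      · rintro ⟨r, ⟨hr0, hr1⟩, rfl⟩
        exact hψsub r ⟨hr0, hr1⟩
      · rintro ⟨hz1, hz2⟩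
        refine ⟨(z - s) / (t - s), ⟨div_nonneg (by linarith) hts.le, ?_⟩, ?_⟩
        · rw [div_le_one hts]; linarith
        · field_simp; ring
    have himg : (fun r => γ (s + r * (t - s))) '' Set.Icc (0:ℝ) 1 = γ '' Set.Icc s t := by
      rw [← hinner_img]
      exact Set.image_comp γ (fun r => s + r * (t - s)) (Set.Icc (0:ℝ) 1)
    have hρΔ : rhoD D (γ s) (γ t) ≤ Δ :=
      csInf_le hbddρ ⟨(fun r => γ (s + r * (t - s))), hσ₀path, by rw [himg]⟩
    have hρnn : 0 ≤ rhoD D (γ s) (γ t) := by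
      apply Real.sInf_nonneg
      rintro L ⟨σ, hσ, rfl⟩
      exact Metric.diam_nonneg
    have hinner := RhoAux.dLength_sub_le_innerApol hD ⟨hγc, hγmap, hγ0, hγ1⟩ hrec hs ht hlt hopt
    have hj := h (γ s) huD (γ t) hvD
    have hjP : jP D (γ s) (γ t) = Real.log (1 + rhoD D (γ s) (γ t) / δ) := by
      unfold jP
      rw [min_eq_left huv]
    have hkey : dLength (apol D) γ s t ≤ c₂ * Real.log (1 + rhoD D (γ s) (γ t) / δ) := by
      rw [← hjP]
      exact le_trans hinner hj
    have hΔle : Δ ≤ (1 + 24 * M) ^ 2 * δ := by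
      by_contra hcon
      push_neg at hcon
      set K := Δ / (6 * δ) with hKdef
      have h6δ : (0:ℝ) < 6 * δ := by linarith
      have hKΔ : Δ = K * (6 * δ) := by rw [hKdef]; exact (div_mul_cancel₀ Δ h6δ.ne').symm
      obtain ⟨hK96, hK3⟩ := arith_K96 hM2 hδ hKΔ hcon
      set k : ℕ := (⌈K⌉ - 3).toNat with hkdef
      have hceil3 : (3:ℤ) ≤ ⌈K⌉ := by
        have h1 : (3:ℝ) ≤ (⌈K⌉:ℝ) := le_trans hK3 (Int.le_ceil K)
        exact_mod_cast h1
      have hkcast : (k:ℝ) = (⌈K⌉:ℝ) - 3 := by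
        have hz : ((k:ℤ)) = ⌈K⌉ - 3 := by rw [hkdef]; exact Int.toNat_of_nonneg (by omega)
        exact_mod_cast hz
      have hkK : K - 3 ≤ (k:ℝ) := by rw [hkcast]; linarith [Int.le_ceil K]
      have hk2K : (k:ℝ) + 2 < K := by rw [hkcast]; linarith [Int.ceil_lt_add_one K]
      have hdiam : ((k:ℝ) + 2) * (6 * δ) < Δ := by
        rw [hKΔ]
        exact mul_lt_mul_of_pos_right hk2K h6δ
      obtain ⟨T, hTm, hT0, hTmem, hTd⟩ :=
        RhoAux.chain_exists hlt.le (hγc.mono (Set.Icc_subset_Icc hs.1 ht.2)) h6δ k hdiam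
      set U : ℕ → ℝ := fun j => if j ≤ k then T j else t with hUdef
      have hUm : Monotone U := by
        intro p q hpq
        simp only [hUdef]
        split_ifs with h1 h2 h2
        · exact hTm hpq
        · exact (hTmem p).2
        · omega
        · exact le_rfl
      have hU0 : U 0 = s := by simp [hUdef, hT0]
      have hUk : U (k+1) = t := by simp only [hUdef]; rw [if_neg (by omega)]
      have hsubst : Set.Icc s t ⊆ Set.Icc (0:ℝ) 1 := Set.Icc_subset_Icc hs.1 ht.2
      have hPmem : (∑ i ∈ Finset.range (k+1), apol D (γ (U i)) (γ (U (i+1)))) ∈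
          RhoAux.pSet (apol D) γ s t := ⟨k+1, U, hUm, hU0, hUk, rfl⟩
      have hPle := RhoAux.le_dLength hD hγc hγmap hrec hs.1 hlt.le ht.2 hPmem
      have hlow : (k:ℝ) * Real.log 4 ≤
          ∑ i ∈ Finset.range (k+1), apol D (γ (U i)) (γ (U (i+1))) := by
        rw [Finset.sum_range_succ]
        have hterm : ∀ i ∈ Finset.range k, Real.log 4 ≤ apol D (γ (U i)) (γ (U (i+1))) := by
          intro i hi
          rw [Finset.mem_range] at hi
          have e1 : U i = T i := if_pos (by omega)
          have e2 : U (i+1) = T (i+1) := if_pos (by omega)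
          rw [e1, e2]
          exact RhoAux.apol_ge_log4 hD hδ (hγmap (hsubst (hTmem i)))
            (hγmap (hsubst (hTmem (i+1)))) (hw _ (hTmem i)) (hw _ (hTmem (i+1)))
            (hTd i hi)
        have hconst : ∑ _i ∈ Finset.range k, Real.log 4 = (k:ℝ) * Real.log 4 := by
          rw [Finset.sum_const, Finset.card_range, nsmul_eq_mul]
        have hsum1 : (k:ℝ) * Real.log 4 ≤
            ∑ i ∈ Finset.range k, apol D (γ (U i)) (γ (U (i+1))) := by
          rw [← hconst]
          exact Finset.sum_le_sum hterm
        have hlast : 0 ≤ apol D (γ (U k)) (γ (U (k+1))) := by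
          have m1 : U k ∈ Set.Icc (0:ℝ) 1 := by
            rw [show U k = T k from if_pos le_rfl]
            exact hsubst (hTmem k)
          have m2 : U (k+1) ∈ Set.Icc (0:ℝ) 1 := by rw [hUk]; exact ht
          exact RhoAux.apol_nonneg hD (hγmap m1) (hγmap m2)
        linarith
      have hloglog : Real.log (1 + rhoD D (γ s) (γ t) / δ) ≤ Real.log (1 + 6 * K) := by
        apply Real.log_le_log (by positivity)
        have h2 : rhoD D (γ s) (γ t) / δ ≤ 6 * K := by
          rw [div_le_iff₀ hδ]
          have he : K * (6*δ) = 6 * K * δ := by ring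
          linarith
        linarith
      have hfinal : (K - 3) * Real.log 4 ≤ c₂ * Real.log (1 + 6 * K) := by
        have hlog4nn : (0:ℝ) ≤ Real.log 4 := Real.log_nonneg (by norm_num)
        have h1 : (K - 3) * Real.log 4 ≤ (k:ℝ) * Real.log 4 :=
          mul_le_mul_of_nonneg_right hkK hlog4nn
        have h2 : (k:ℝ) * Real.log 4 ≤ c₂ * Real.log (1 + rhoD D (γ s) (γ t) / δ) :=
          le_trans (le_trans hlow hPle) hkey
        have h3 : c₂ * Real.log (1 + rhoD D (γ s) (γ t) / δ) ≤ c₂ * Real.log (1 + 6 * K) :=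
          mul_le_mul_of_nonneg_left hloglog (by linarith)
        linarith
      exact RhoAux.numeric_contradiction hM2 hc₂M hc₂ hK96 hfinal
    calc rhoD D (γ s) (γ t) ≤ Δ := hρΔ
    _ ≤ (1 + 24 * M) ^ 2 * δ := hΔle
end
end
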